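/- arXiv:math/0307204 — 6 statements merged into one kernel-verified Lean document; each statement's English description precedes it below -/
import Mathlib

section
/- Let a, c, d be nonnegative integers, let 0 < t₀ ≤ 1, and let B > 0 and M > 0 be real constants. Then there exist a constant C > 0 and an integer n₀ such that for all integers n ≥ n₀, all real t ∈ [t₀, 1], all real b ≥ 0 with b·√(2n) ∈ ℕ and b ≤ B, and all integers k with |k − n·t| ≤ M and k ≥ b·√(2n), the following holds: | (2k+a)! · √π · (n t)^{c+d+1/2−a} · 2^{−(2k+a)} · exp(2b²/t) / ( (k + b√(2n) + c)! · (k − b√(2n) + d)! ) − 1 | ≤ C/√n. -/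
open Filter Stirling Real Topology

-- quantitative upper bound for log stirlingSeq
theorem st_upper (n : ℕ) (hn : 1 ≤ n) :
    Real.log (stirlingSeq (n + 1)) - Real.log (Real.sqrt Real.pi) ≤ 1 / (4 * n) := by
  have hx : ∀ p : ℕ, Real.log (stirlingSeq (n + 1)) - Real.log (stirlingSeq (n + 1 + p))
      ≤ 1 / (4 * n) - 1 / (4 * (n + p : ℝ)) := by
    intro p
    induction p with
    | zero => simp
    | succ p ih =>
      have h1 := Stirling.log_stirlingSeq_sub_log_stirlingSeq_succ (n + p + 1)
      rw [show n + p + 1 + 1 = n + p + 2 from rfl] at h1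
      have hx : (1 : ℝ) ≤ (n + p : ℝ) := by
        have : (1:ℝ) ≤ (n:ℝ) := by exact_mod_cast hn
        have : (0:ℝ) ≤ (p:ℝ) := by positivity
        linarith
      have h2 : (1:ℝ) / (4 * (↑(n + p + 1) : ℝ) ^ 2) ≤
          1 / (4 * ((n:ℝ) + p)) - 1 / (4 * ((n:ℝ) + p + 1)) := by
        push_cast
        rw [div_sub_div _ _ (by positivity) (by positivity), div_le_div_iff₀ (by positivity) (by positivity)]
        ring_nf
        nlinarith [hx]
      have h3 : stirlingSeq (n + 1 + (p+1)) = stirlingSeq (n + p + 2) := by ring_nf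
      have h4 : stirlingSeq (n + 1 + p) = stirlingSeq (n + p + 1) := by ring_nf
      push_cast at ih ⊢
      rw [h3]
      rw [h4] at ih
      push_cast at h1 h2
      have hc : 1 / (4 * ((n:ℝ) + ((p:ℝ) + 1))) = 1 / (4 * ((n:ℝ) + (p:ℝ) + 1)) := by ring_nf
      rw [hc]
      linarith
  have hlim : Tendsto (fun p : ℕ => Real.log (stirlingSeq (n + 1 + p))) atTop
      (𝓝 (Real.log (Real.sqrt Real.pi))) := by
    have h0 : Tendsto (fun p : ℕ => Real.log (stirlingSeq p)) atTop
        (𝓝 (Real.log (Real.sqrt Real.pi))) :=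
      ((Real.continuousAt_log (by positivity)).tendsto).comp Stirling.tendsto_stirlingSeq_sqrt_pi
    have := h0.comp (tendsto_add_atTop_nat (n + 1))
    convert this using 2 with p
    simp [Function.comp, add_comm]
  have : ∀ p : ℕ, Real.log (stirlingSeq (n + 1)) - 1 / (4 * n) ≤
      Real.log (stirlingSeq (n + 1 + p)) := by
    intro p
    have := hx p
    have hp : (0:ℝ) ≤ 1 / (4 * ((n:ℝ) + p)) := by positivity
    linarith
  have := ge_of_tendsto' hlim this
  linarith

theorem st_lower (n : ℕ) : Real.sqrt Real.pi ≤ stirlingSeq (n + 1) := by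
  have htend : Tendsto (stirlingSeq ∘ Nat.succ) atTop (𝓝 (Real.sqrt Real.pi)) := by
    have := (Filter.tendsto_add_atTop_iff_nat 1).2 Stirling.tendsto_stirlingSeq_sqrt_pi
    exact this
  exact Stirling.stirlingSeq'_antitone.le_of_tendsto htend n

theorem log1p_sub_bound {z : ℝ} (hz : |z| ≤ 1/2) :
    |Real.log (1 + z) - z + z^2/2| ≤ 2 * |z|^3 := by
  have hz1 : |(-z)| < 1 := by rw [abs_neg]; linarith [abs_nonneg z]
  have h := Real.abs_log_sub_add_sum_range_le hz1 2
  simp [Finset.sum_range_succ] at h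
  have h3 : Real.log (1 + z) - z + z^2/2 = -z + z^2/(1+1) + Real.log (1 + z) := by ring
  rw [h3]
  refine h.trans ?_
  rw [div_le_iff₀ (by linarith [abs_nonneg z])]
  nlinarith [abs_nonneg z, pow_nonneg (abs_nonneg z) 3]

theorem log1p_abs_bound {z : ℝ} (hz : |z| ≤ 1/2) : |Real.log (1 + z)| ≤ 2 * |z| := by
  have h := log1p_sub_bound hz
  have h4 : |z|^2 ≤ (1:ℝ)/4 := by nlinarith [abs_nonneg z]
  have t0 : Real.log (1+z) = (Real.log (1+z) - z + z^2/2) + (z - z^2/2) := by ring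
  have t1 : |z - z^2/2| ≤ |z| + z^2/2 := by
    refine (abs_sub _ _).trans ?_
    rw [abs_of_nonneg (by positivity : (0:ℝ) ≤ z^2/2)]
  have t2 : |Real.log (1+z)| ≤ |Real.log (1+z) - z + z^2/2| + |z - z^2/2| := by
    have := abs_add_le (Real.log (1+z) - z + z^2/2) (z - z^2/2)
    rw [← t0] at this; exact this
  have hz2 : z^2 = |z|^2 := (sq_abs z).symm
  nlinarith [abs_nonneg z]

theorem key_expand (k m : ℝ) (hk : 0 < k) (hm : |m| ≤ k/2) :
    |(k + m) * Real.log (1 + m/k) - m - m^2/(2*k)| ≤ 4 * |m|^3 / k^2 := by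
  have hz : |m/k| ≤ 1/2 := by
    rw [abs_div, abs_of_pos hk, div_le_iff₀ hk]; linarith
  have h := log1p_sub_bound hz
  set z := m / k with hzdef
  set r := Real.log (1 + z) - z + z^2/2 with hrdef
  have hlog : Real.log (1 + m/k) = z - z^2/2 + r := by rw [hrdef]; ring
  have hmk : m = k * z := by rw [hzdef]; field_simp
  have hid : (k + m) * Real.log (1 + m/k) - m - m^2/(2*k) = (k+m)*r - m*z^2/2 := by
    rw [hlog, hmk]; field_simp; ring
  rw [hid]
  have hkm : |k + m| ≤ 3*k/2 := by
    rw [abs_le]; constructor <;> [nlinarith [abs_le.1 hm]; nlinarith [abs_le.1 hm]]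
  have hz3 : |z|^3 = |m|^3 / k^3 := by
    rw [hzdef, abs_div, abs_of_pos hk, div_pow]
  have hz2 : z^2 = m^2/k^2 := by rw [hzdef]; rw [div_pow]
  have hr : |r| ≤ 2 * (|m|^3 / k^3) := by rw [← hz3]; exact h
  have hm3 : |m| * m^2 = |m|^3 := by rw [← sq_abs m]; ring
  calc |(k+m)*r - m*z^2/2| ≤ |(k+m)*r| + |m*z^2/2| := abs_sub _ _
    _ = |k + m| * |r| + |m| * (z^2/2) := by
        rw [abs_mul, abs_div, abs_mul, abs_of_nonneg (sq_nonneg z), abs_two]; ring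
    _ ≤ (3*k/2) * (2*(|m|^3/k^3)) + |m| * (m^2/k^2/2) := by
        rw [hz2]; gcongr
    _ ≤ 4 * |m|^3 / k^2 := by
        have h1 : (3*k/2) * (2*(|m|^3/k^3)) = 3 * |m|^3/k^2 := by field_simp
        have h2 : |m| * (m^2/k^2/2) = |m|^3/(2*k^2) := by rw [← hm3]; ring
        rw [h1, h2]
        rw [div_add_div _ _ (by positivity) (by positivity),
          div_le_div_iff₀ (by positivity) (by positivity)]
        nlinarith [pow_nonneg (abs_nonneg m) 3, pow_pos hk 2, pow_pos hk 4]

theorem stirling_quant (m : ℕ) (hm : 2 ≤ m) :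
    |Real.log (Nat.factorial m) - (Real.log (Real.sqrt Real.pi)
      + 1/2 * Real.log (2*m) + m * Real.log m - m)| ≤ 1/(2*m) := by
  obtain ⟨n, rfl⟩ : ∃ n, m = n + 1 := ⟨m - 1, by omega⟩
  have hn : 1 ≤ n := by omega
  have hform := Stirling.log_stirlingSeq_formula (n + 1)
  have hme : (0:ℝ) < ((n:ℝ) + 1) := by positivity
  have hlogdiv : Real.log (((n+1 : ℕ) : ℝ) / Real.exp 1) = Real.log ((n+1 : ℕ) : ℝ) - 1 := by
    rw [Real.log_div (by positivity) (Real.exp_ne_zero 1), Real.log_exp]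
  have hD : Real.log (Nat.factorial (n+1)) - (Real.log (Real.sqrt Real.pi)
      + 1/2 * Real.log (2*((n+1:ℕ):ℝ)) + ((n+1:ℕ):ℝ) * Real.log ((n+1:ℕ):ℝ) - ((n+1:ℕ):ℝ))
      = Real.log (stirlingSeq (n+1)) - Real.log (Real.sqrt Real.pi) := by
    rw [hform, hlogdiv]; push_cast; ring
  have hlow : 0 ≤ Real.log (stirlingSeq (n+1)) - Real.log (Real.sqrt Real.pi) := by
    have := st_lower n
    have h2 := Real.log_le_log (Real.sqrt_pos.mpr Real.pi_pos) this
    linarith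
  have hup := st_upper n hn
  have hnn : (1:ℝ) ≤ (n:ℝ) := by exact_mod_cast hn
  have hcompare : 1/(4*(n:ℝ)) ≤ 1/(2*((n+1:ℕ):ℝ)) := by
    push_cast
    rw [div_le_div_iff₀ (by positivity) (by positivity)]
    linarith
  rw [hD, abs_le]
  constructor
  · have : (0:ℝ) ≤ 1/(2*((n+1:ℕ):ℝ)) := by positivity
    linarith
  · linarith

theorem abs14 (x1 x2 x3 x4 x5 x6 x7 x8 x9 x10 x11 x12 x13 x14 : ℝ) :
    |x1 - x2 - x3 + x4 - x5 - x6 + x7 + x8 - x9 - x10 + x11 + x12 - x13 - x14| ≤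
    |x1| + |x2| + |x3| + |x4| + |x5| + |x6| + |x7| + |x8| + |x9| + |x10| + |x11| + |x12|
      + |x13| + |x14| := by
  have a1 : |x1 - x2| ≤ |x1| + |x2| := abs_sub _ _
  have a2 : |x1 - x2 - x3| ≤ |x1 - x2| + |x3| := abs_sub _ _
  have a3 : |x1 - x2 - x3 + x4| ≤ |x1 - x2 - x3| + |x4| := abs_add_le _ _
  have a4 : |x1 - x2 - x3 + x4 - x5| ≤ |x1 - x2 - x3 + x4| + |x5| := abs_sub _ _
  have a5 : |x1 - x2 - x3 + x4 - x5 - x6| ≤ |x1 - x2 - x3 + x4 - x5| + |x6| := abs_sub _ _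
  have a6 : |x1 - x2 - x3 + x4 - x5 - x6 + x7| ≤ |x1 - x2 - x3 + x4 - x5 - x6| + |x7| :=
    abs_add_le _ _
  have a7 : |x1 - x2 - x3 + x4 - x5 - x6 + x7 + x8| ≤ |x1 - x2 - x3 + x4 - x5 - x6 + x7| + |x8| :=
    abs_add_le _ _
  have a8 : |x1 - x2 - x3 + x4 - x5 - x6 + x7 + x8 - x9| ≤
      |x1 - x2 - x3 + x4 - x5 - x6 + x7 + x8| + |x9| := abs_sub _ _
  have a9 : |x1 - x2 - x3 + x4 - x5 - x6 + x7 + x8 - x9 - x10| ≤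
      |x1 - x2 - x3 + x4 - x5 - x6 + x7 + x8 - x9| + |x10| := abs_sub _ _
  have a10 : |x1 - x2 - x3 + x4 - x5 - x6 + x7 + x8 - x9 - x10 + x11| ≤
      |x1 - x2 - x3 + x4 - x5 - x6 + x7 + x8 - x9 - x10| + |x11| := abs_add_le _ _
  have a11 : |x1 - x2 - x3 + x4 - x5 - x6 + x7 + x8 - x9 - x10 + x11 + x12| ≤
      |x1 - x2 - x3 + x4 - x5 - x6 + x7 + x8 - x9 - x10 + x11| + |x12| := abs_add_le _ _
  have a12 : |x1 - x2 - x3 + x4 - x5 - x6 + x7 + x8 - x9 - x10 + x11 + x12 - x13| ≤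
      |x1 - x2 - x3 + x4 - x5 - x6 + x7 + x8 - x9 - x10 + x11 + x12| + |x13| := abs_sub _ _
  have a13 : |x1 - x2 - x3 + x4 - x5 - x6 + x7 + x8 - x9 - x10 + x11 + x12 - x13 - x14| ≤
      |x1 - x2 - x3 + x4 - x5 - x6 + x7 + x8 - x9 - x10 + x11 + x12 - x13| + |x14| := abs_sub _ _
  linarith

set_option maxHeartbeats 2000000 in

/-- uniform Stirling-type estimate (Lemma 1 of the paper).
For nonnegative integers `a, c, d`, `0 < t₀ ≤ 1`, and bounds `B, M > 0`, there are
`C > 0` and `n₀` such that for all `n ≥ n₀`, all `t ∈ [t₀, 1]`, all `b ∈ [0, B]` with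
`b·√(2n) = j ∈ ℕ`, and all integers `k` with `|k − n·t| ≤ M` and `k ≥ b·√(2n)`,
`| (2k+a)! √π (nt)^{c+d+1/2−a} 2^{−(2k+a)} e^{2b²/t} / ((k+b√(2n)+c)! (k−b√(2n)+d)!) − 1 | ≤ C/√n`. -/
theorem stirling_star_estimate (a c d : ℕ) (t₀ : ℝ) (ht₀ : 0 < t₀) (ht₀' : t₀ ≤ 1)
    (B M : ℝ) (hB : 0 < B) (hM : 0 < M) :
    ∃ C > (0 : ℝ), ∃ n₀ : ℕ, ∀ n : ℕ, n₀ ≤ n →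
      ∀ t : ℝ, t₀ ≤ t → t ≤ 1 →
      ∀ b : ℝ, 0 ≤ b → b ≤ B →
      ∀ j : ℕ, (j : ℝ) = b * Real.sqrt (2 * n) →
      ∀ k : ℕ, |(k : ℝ) - n * t| ≤ M → j ≤ k →
      |(Nat.factorial (2 * k + a) : ℝ) * Real.sqrt Real.pi
          * ((n : ℝ) * t) ^ ((c : ℝ) + (d : ℝ) + 1 / 2 - (a : ℝ))
          * ((2 : ℝ) ^ (2 * k + a))⁻¹ * Real.exp (2 * b ^ 2 / t)
          / ((Nat.factorial (k + j + c) : ℝ) * (Nat.factorial (k - j + d) : ℝ))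
        - 1| ≤ C / Real.sqrt n := by
  set Q : ℝ := (a : ℝ) + (c : ℝ) + (d : ℝ) + 2 * B + M + 2 with hQdef
  have ha0 : (0:ℝ) ≤ (a:ℝ) := Nat.cast_nonneg a
  have hc0 : (0:ℝ) ≤ (c:ℝ) := Nat.cast_nonneg c
  have hd0 : (0:ℝ) ≤ (d:ℝ) := Nat.cast_nonneg d
  have hQ2 : (2:ℝ) ≤ Q := by rw [hQdef]; linarith
  have hQpos : (0:ℝ) < Q := by linarith
  set C₁ : ℝ := 4200 * Q ^ 3 / t₀ ^ 3 with hC₁def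
  have hC₁pos : 0 < C₁ := by positivity
  clear_value Q C₁
  refine ⟨2 * C₁, by linarith only [hC₁pos], ⌈(8 * Q / t₀) ^ 2 + C₁ ^ 2⌉₊, ?_⟩
  intro n hn t ht ht1 b hb hbB j hj k hkM hjk
  have hn0 : ((8 * Q / t₀) ^ 2 + C₁ ^ 2 : ℝ) ≤ n := by
    refine le_trans (Nat.le_ceil _) ?_
    exact_mod_cast hn
  set rn := Real.sqrt n with hrndef
  have hrn0 : 0 ≤ rn := Real.sqrt_nonneg n
  have hrnsq : rn ^ 2 = n := by rw [hrndef]; exact Real.sq_sqrt (Nat.cast_nonneg n)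
  have hrn8 : 8 * Q / t₀ ≤ rn := by
    rw [hrndef]
    exact (Real.le_sqrt (by positivity) (by positivity)).mpr (by linarith only [hn0, sq_nonneg C₁])
  have hrnC : C₁ ≤ rn := by
    rw [hrndef]
    exact (Real.le_sqrt hC₁pos.le (by positivity)).mpr
      (by linarith only [hn0, sq_nonneg (8*Q/t₀)])
  clear_value rn
  have h16 : (16:ℝ) ≤ 8 * Q / t₀ := by
    rw [le_div_iff₀ ht₀]; nlinarith only [hQ2, ht₀', ht₀]
  have hrn1 : (1:ℝ) ≤ rn := by linarith only [h16, hrn8]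
  have hrnpos : (0:ℝ) < rn := by linarith only [hrn1]
  have hn1 : (1:ℝ) ≤ (n:ℝ) := by nlinarith only [hrn1, hrnsq]
  set K := (k : ℝ) with hKdef
  set J := (j : ℝ) with hJdef
  set s := (n : ℝ) * t with hsdef
  clear_value K J s
  have ht' : 0 < t := lt_of_lt_of_le ht₀ ht
  have hsK : |K - s| ≤ M := hkM
  have hsKle : K - s ≤ M ∧ -(M) ≤ K - s := ⟨(abs_le.1 hsK).2, (abs_le.1 hsK).1⟩
  have hs_low : t₀ * rn ^ 2 ≤ s := by
    rw [hsdef, hrnsq]; nlinarith only [hn1, ht]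
  have hMQ : M ≤ Q := by rw [hQdef]; linarith
  have haQ : (a:ℝ) ≤ Q := by rw [hQdef]; linarith
  have hcQ : (c:ℝ) ≤ Q := by rw [hQdef]; linarith
  have hdQ : (d:ℝ) ≤ Q := by rw [hQdef]; linarith
  have hQrn : Q ≤ Q * rn := by nlinarith only [hQpos, hrn1]
  have h8Q : 8 * Q ≤ t₀ * rn := by
    have := (div_le_iff₀ ht₀).1 hrn8; linarith only [this]
  have hQlern : Q ≤ rn := by nlinarith only [h8Q, ht₀', hrn0, hQpos]
  have ht0rn : 8 * Q * rn ≤ t₀ * rn ^ 2 := by nlinarith only [h8Q, hrn0]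
  have hK_low : t₀ * rn ^ 2 - M ≤ K := by linarith only [hsKle.2, hs_low]
  have hK7 : 7 * Q * rn ≤ K := by linarith only [hK_low, ht0rn, hMQ, hQrn]
  have hK2 : t₀ * rn ^ 2 / 2 ≤ K := by
    linarith only [hK_low, ht0rn, hMQ, hQrn, mul_nonneg ht₀.le (sq_nonneg rn)]
  have hKrn : rn ≤ K := by nlinarith only [hK7, hQ2, hrn0]
  have hKpos : (0:ℝ) < K := by linarith only [hKrn, hrnpos]
  have hsqrt2 : Real.sqrt 2 ≤ 2 := by
    nlinarith only [Real.sq_sqrt (show (0:ℝ) ≤ 2 by norm_num), Real.sqrt_nonneg 2]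
  have h2n : Real.sqrt (2 * n) ≤ 2 * rn := by
    rw [show ((2:ℝ) * n) = 2 * (n:ℝ) from rfl, Real.sqrt_mul (by norm_num : (0:ℝ) ≤ 2)]
    nlinarith only [hsqrt2, hrn0, Real.sqrt_nonneg (2:ℝ), hrndef]
  have hsq2nn : (0:ℝ) ≤ Real.sqrt (2 * n) := Real.sqrt_nonneg _
  have hJ0 : (0:ℝ) ≤ J := by rw [hJdef]; exact Nat.cast_nonneg j
  have h2B : 2 * B ≤ Q := by rw [hQdef]; linarith only [ha0, hc0, hd0, hM]
  have hJle : J ≤ Q * rn := by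
    rw [hj]
    have h1 : b * Real.sqrt (2*n) ≤ B * (2 * rn) :=
      mul_le_mul hbB h2n hsq2nn hB.le
    nlinarith only [h1, h2B, hrn0]
  have hJ2 : J ^ 2 = 2 * n * b ^ 2 := by
    rw [hj, mul_pow, Real.sq_sqrt (by positivity)]; ring
  have hKJ : 6 * Q * rn ≤ K - J := by linarith only [hK7, hJle]
  have hspos : 0 < s := by nlinarith only [hs_low, mul_pos ht₀ (pow_pos hrnpos 2)]
  -- cast identities
  have hNr : ((2 * k + a : ℕ) : ℝ) = 2 * K + a := by rw [hKdef]; push_cast; ring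
  have hpr : ((k + j + c : ℕ) : ℝ) = K + J + c := by rw [hKdef, hJdef]; push_cast; ring
  have hqr : ((k - j + d : ℕ) : ℝ) = K - J + d := by
    rw [hKdef, hJdef]; push_cast [hjk]; ring
  have hk1R : (1:ℝ) ≤ K := by linarith only [hKrn, hrn1]
  have hkj2R : J + 2 ≤ K := by nlinarith only [hKJ, hQ2, hrn1, hQpos, hrn0]
  have hkj2R' : J + 2 ≤ K := hkj2R
  rw [hKdef] at hk1R hkj2R
  rw [hJdef] at hkj2R
  have hk1 : 1 ≤ k := by exact_mod_cast hk1R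
  have hkj2 : j + 2 ≤ k := by exact_mod_cast hkj2R
  have hN2 : 2 ≤ 2 * k + a := by omega
  have hp2 : 2 ≤ k + j + c := by omega
  have hq2 : 2 ≤ k - j + d := by omega
  -- factorial positivity
  have hf1 : (0:ℝ) < (Nat.factorial (2*k+a) : ℝ) := by positivity
  have hf2 : (0:ℝ) < (Nat.factorial (k+j+c) : ℝ) := by positivity
  have hf3 : (0:ℝ) < (Nat.factorial (k-j+d) : ℝ) := by positivity
  -- Stirling error terms
  set E₁ : ℝ := Real.log (Nat.factorial (2*k+a) : ℝ) - (Real.log (Real.sqrt Real.pi)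
      + 1/2 * Real.log (2*((2*k+a:ℕ):ℝ)) + ((2*k+a:ℕ):ℝ) * Real.log ((2*k+a:ℕ):ℝ)
      - ((2*k+a:ℕ):ℝ)) with hE₁def
  set E₂ : ℝ := Real.log (Nat.factorial (k+j+c) : ℝ) - (Real.log (Real.sqrt Real.pi)
      + 1/2 * Real.log (2*((k+j+c:ℕ):ℝ)) + ((k+j+c:ℕ):ℝ) * Real.log ((k+j+c:ℕ):ℝ)
      - ((k+j+c:ℕ):ℝ)) with hE₂def
  set E₃ : ℝ := Real.log (Nat.factorial (k-j+d) : ℝ) - (Real.log (Real.sqrt Real.pi)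
      + 1/2 * Real.log (2*((k-j+d:ℕ):ℝ)) + ((k-j+d:ℕ):ℝ) * Real.log ((k-j+d:ℕ):ℝ)
      - ((k-j+d:ℕ):ℝ)) with hE₃def
  have hE₁ : |E₁| ≤ 1/(2*((2*k+a:ℕ):ℝ)) := stirling_quant _ hN2
  have hE₂ : |E₂| ≤ 1/(2*((k+j+c:ℕ):ℝ)) := stirling_quant _ hp2
  have hE₃ : |E₃| ≤ 1/(2*((k-j+d:ℕ):ℝ)) := stirling_quant _ hq2
  -- log(1+z) abbreviations
  set lα := Real.log (1 + (a:ℝ)/(2*K)) with hlαdef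
  set lx := Real.log (1 + (J + (c:ℝ))/K) with hlxdef
  set ly := Real.log (1 + ((d:ℝ) - J)/K) with hlydef
  set lw := Real.log (1 + (s - K)/K) with hlwdef
  set A₁ : ℝ := (2*K + (a:ℝ)) * lα - (a:ℝ) - (a:ℝ)^2/(2*(2*K)) with hA₁def
  set A₂ : ℝ := (K + (J + (c:ℝ))) * lx - (J + (c:ℝ)) - (J + (c:ℝ))^2/(2*K) with hA₂def
  set A₃ : ℝ := (K + ((d:ℝ) - J)) * ly - ((d:ℝ) - J) - ((d:ℝ) - J)^2/(2*K) with hA₃def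
  have hmα : |(a:ℝ)| ≤ (2*K)/2 := by
    rw [abs_of_nonneg ha0]; linarith only [haQ, hQlern, hKrn]
  have hmx : |J + (c:ℝ)| ≤ K/2 := by
    rw [abs_of_nonneg (by linarith only [hJ0, hc0])]
    linarith only [hJle, hcQ, hQrn, hK7, mul_nonneg hQpos.le hrn0]
  have hmy : |(d:ℝ) - J| ≤ K/2 := by
    rw [abs_le]
    constructor <;> [skip; skip] <;>
      linarith only [hdQ, hQrn, hK7, hJle, hJ0, hd0, hQlern, hKrn, mul_nonneg hQpos.le hrn0]
  have hA₁ : |A₁| ≤ 4 * |(a:ℝ)|^3 / (2*K)^2 := key_expand (2*K) a (by linarith) hmα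
  have hA₂ : |A₂| ≤ 4 * |J + (c:ℝ)|^3 / K^2 := key_expand K (J + c) hKpos hmx
  have hA₃ : |A₃| ≤ 4 * |(d:ℝ) - J|^3 / K^2 := key_expand K ((d:ℝ) - J) hKpos hmy
  -- lw bound
  have hwz : |(s - K)/K| ≤ 1/2 := by
    rw [abs_div, abs_of_pos hKpos, div_le_iff₀ hKpos, abs_sub_comm]
    linarith only [hsK, hMQ, hQrn, hK7, mul_nonneg hQpos.le hrn0]
  have hlw : |lw| ≤ 2 * (|s-K|/K) := by
    have := log1p_abs_bound hwz
    rw [abs_div, abs_of_pos hKpos] at this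
    exact this
  -- positivity of the denominators
  have hsplit : Real.log ((Nat.factorial (2 * k + a) : ℝ) * Real.sqrt Real.pi
          * s ^ ((c : ℝ) + (d : ℝ) + 1 / 2 - (a : ℝ))
          * ((2 : ℝ) ^ (2 * k + a))⁻¹ * Real.exp (2 * b ^ 2 / t)
          / ((Nat.factorial (k + j + c) : ℝ) * (Nat.factorial (k - j + d) : ℝ)))
      = Real.log (Nat.factorial (2*k+a) : ℝ) + Real.log (Real.sqrt Real.pi)
        + ((c : ℝ) + (d : ℝ) + 1 / 2 - (a : ℝ)) * Real.log s
        + (-(((2*k+a:ℕ):ℝ) * Real.log 2)) + 2*b^2/t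
        - Real.log (Nat.factorial (k+j+c) : ℝ) - Real.log (Nat.factorial (k-j+d) : ℝ) := by
    have hrp' : 0 < s ^ ((c : ℝ) + (d : ℝ) + 1 / 2 - (a : ℝ)) := Real.rpow_pos_of_pos hspos _
    have hm1 : 0 < (Nat.factorial (2*k+a) : ℝ) * Real.sqrt Real.pi :=
      mul_pos hf1 (Real.sqrt_pos.mpr Real.pi_pos)
    have hm2 : 0 < (Nat.factorial (2*k+a) : ℝ) * Real.sqrt Real.pi
        * s ^ ((c : ℝ) + (d : ℝ) + 1 / 2 - (a : ℝ)) := mul_pos hm1 hrp'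
    have hinv2 : (0:ℝ) < ((2:ℝ)^(2*k+a))⁻¹ := by positivity
    have hm3 : 0 < (Nat.factorial (2*k+a) : ℝ) * Real.sqrt Real.pi
        * s ^ ((c : ℝ) + (d : ℝ) + 1 / 2 - (a : ℝ)) * ((2:ℝ)^(2*k+a))⁻¹ := mul_pos hm2 hinv2
    have hm4 : 0 < (Nat.factorial (2*k+a) : ℝ) * Real.sqrt Real.pi
        * s ^ ((c : ℝ) + (d : ℝ) + 1 / 2 - (a : ℝ)) * ((2:ℝ)^(2*k+a))⁻¹
        * Real.exp (2*b^2/t) := mul_pos hm3 (Real.exp_pos _)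
    rw [Real.log_div hm4.ne' (mul_pos hf2 hf3).ne', Real.log_mul hm3.ne' (Real.exp_ne_zero _),
      Real.log_mul hm2.ne' hinv2.ne', Real.log_mul hm1.ne' hrp'.ne',
      Real.log_mul hf1.ne' (Real.sqrt_pos.mpr Real.pi_pos).ne', Real.log_rpow hspos,
      Real.log_inv, Real.log_pow, Real.log_exp, Real.log_mul hf2.ne' hf3.ne']
    ring
  -- R and its positivity
  set R : ℝ := (Nat.factorial (2 * k + a) : ℝ) * Real.sqrt Real.pi
          * s ^ ((c : ℝ) + (d : ℝ) + 1 / 2 - (a : ℝ))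
          * ((2 : ℝ) ^ (2 * k + a))⁻¹ * Real.exp (2 * b ^ 2 / t)
          / ((Nat.factorial (k + j + c) : ℝ) * (Nat.factorial (k - j + d) : ℝ)) with hRdef
  have hrp : 0 < s ^ ((c : ℝ) + (d : ℝ) + 1 / 2 - (a : ℝ)) := Real.rpow_pos_of_pos hspos _
  have hRpos : 0 < R := by
    rw [hRdef]
    exact div_pos (mul_pos (mul_pos (mul_pos (mul_pos hf1 (Real.sqrt_pos.mpr Real.pi_pos)) hrp)
      (by positivity)) (Real.exp_pos _)) (mul_pos hf2 hf3)
  -- rearranged Stirling identities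
  have hE1' : Real.log (Nat.factorial (2*k+a) : ℝ) = E₁ + (Real.log (Real.sqrt Real.pi)
      + 1/2 * Real.log (2*((2*k+a:ℕ):ℝ)) + ((2*k+a:ℕ):ℝ) * Real.log ((2*k+a:ℕ):ℝ)
      - ((2*k+a:ℕ):ℝ)) := by rw [hE₁def]; ring
  have hE2' : Real.log (Nat.factorial (k+j+c) : ℝ) = E₂ + (Real.log (Real.sqrt Real.pi)
      + 1/2 * Real.log (2*((k+j+c:ℕ):ℝ)) + ((k+j+c:ℕ):ℝ) * Real.log ((k+j+c:ℕ):ℝ)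
      - ((k+j+c:ℕ):ℝ)) := by rw [hE₂def]; ring
  have hE3' : Real.log (Nat.factorial (k-j+d) : ℝ) = E₃ + (Real.log (Real.sqrt Real.pi)
      + 1/2 * Real.log (2*((k-j+d:ℕ):ℝ)) + ((k-j+d:ℕ):ℝ) * Real.log ((k-j+d:ℕ):ℝ)
      - ((k-j+d:ℕ):ℝ)) := by rw [hE₃def]; ring
  -- positivity of log arguments
  have h2Kpos : (0:ℝ) < 2*K := by linarith only [hKpos]
  have hαpos : (0:ℝ) < 1 + (a:ℝ)/(2*K) := by
    have : (0:ℝ) ≤ (a:ℝ)/(2*K) := div_nonneg ha0 h2Kpos.le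
    linarith only [this]
  have hxpos : (0:ℝ) < 1 + (J+(c:ℝ))/K := by
    have : (0:ℝ) ≤ (J+(c:ℝ))/K := div_nonneg (by linarith only [hJ0, hc0]) hKpos.le
    linarith only [this]
  have hypos : (0:ℝ) < 1 + ((d:ℝ)-J)/K := by
    have : -(1/2:ℝ) ≤ ((d:ℝ)-J)/K := by
      rw [le_div_iff₀ hKpos]; linarith only [(abs_le.1 hmy).1]
    linarith only [this]
  have hwpos : (0:ℝ) < 1 + (s-K)/K := by
    have := (abs_le.1 hwz).1
    linarith only [this]
  have hNpos : (0:ℝ) < ((2*k+a:ℕ):ℝ) := by rw [hNr]; linarith only [hKpos, ha0]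
  have hppos : (0:ℝ) < ((k+j+c:ℕ):ℝ) := by rw [hpr]; linarith only [hKpos, hJ0, hc0]
  have hqpos : (0:ℝ) < ((k-j+d:ℕ):ℝ) := by rw [hqr]; linarith only [hkj2R', hd0]
  -- log expansions
  have hlogN : Real.log ((2*k+a:ℕ):ℝ) = Real.log 2 + Real.log K + lα := by
    rw [show ((2*k+a:ℕ):ℝ) = 2*K*(1 + (a:ℝ)/(2*K)) by rw [hNr]; field_simp [hKpos.ne']; try ring,
      Real.log_mul h2Kpos.ne' hαpos.ne', Real.log_mul two_ne_zero hKpos.ne', hlαdef]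
  have hlogp : Real.log ((k+j+c:ℕ):ℝ) = Real.log K + lx := by
    rw [show ((k+j+c:ℕ):ℝ) = K*(1 + (J+(c:ℝ))/K) by rw [hpr]; field_simp [hKpos.ne']; try ring,
      Real.log_mul hKpos.ne' hxpos.ne', hlxdef]
  have hlogq : Real.log ((k-j+d:ℕ):ℝ) = Real.log K + ly := by
    rw [show ((k-j+d:ℕ):ℝ) = K*(1 + ((d:ℝ)-J)/K) by rw [hqr]; field_simp [hKpos.ne']; try ring,
      Real.log_mul hKpos.ne' hypos.ne', hlydef]
  have hlogs : Real.log s = Real.log K + lw := by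
    rw [show s = K*(1 + (s-K)/K) by field_simp [hKpos.ne']; try ring,
      Real.log_mul hKpos.ne' hwpos.ne', hlwdef]
  have hlog2N : Real.log (2*((2*k+a:ℕ):ℝ)) = Real.log 2 + Real.log ((2*k+a:ℕ):ℝ) :=
    Real.log_mul two_ne_zero hNpos.ne'
  have hlog2p : Real.log (2*((k+j+c:ℕ):ℝ)) = Real.log 2 + Real.log ((k+j+c:ℕ):ℝ) :=
    Real.log_mul two_ne_zero hppos.ne'
  have hlog2q : Real.log (2*((k-j+d:ℕ):ℝ)) = Real.log 2 + Real.log ((k-j+d:ℕ):ℝ) :=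
    Real.log_mul two_ne_zero hqpos.ne'
  -- the main logarithmic identity
  have hlog : Real.log R = E₁ - E₂ - E₃ + A₁ - A₂ - A₃
      + ((c:ℝ)+(d:ℝ)+1/2-(a:ℝ)) * lw + (1/2) * lα - (1/2) * lx - (1/2) * ly
      + (2*b^2/t - J^2/K) + (a:ℝ)^2/(2*(2*K)) - J*((c:ℝ)-(d:ℝ))/K
      - ((c:ℝ)^2+(d:ℝ)^2)/(2*K) := by
    rw [hRdef, hsplit, hE1', hE2', hE3', hlog2N, hlog2p, hlog2q, hlogN, hlogp, hlogq, hlogs,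
      hA₁def, hA₂def, hA₃def, hNr, hpr, hqr]
    ring
  -- bounding machinery
  set T : ℝ := 300*Q^3/(t₀^3*rn) with hTdef
  have hQ3 : (8:ℝ) ≤ Q^3 := by nlinarith only [hQ2, mul_nonneg (sub_nonneg.2 hQ2) (sq_nonneg Q)]
  have ht3 : t₀^3 ≤ 1 := pow_le_one₀ ht₀.le ht₀'
  have h1rnT : 1/rn ≤ T := by
    rw [hTdef, div_le_div_iff₀ hrnpos (by positivity)]
    nlinarith only [hQ3, ht3, hrn0, hrnpos]
  have hET : ∀ x : ℝ, rn ≤ x → 1/(2*x) ≤ T := by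
    intro x hx
    refine le_trans ?_ h1rnT
    have hxpos' : 0 < x := lt_of_lt_of_le hrnpos hx
    rw [div_le_div_iff₀ (by linarith only [hxpos']) hrnpos]
    linarith only [hx, hxpos']
  have hKden : (0:ℝ) < t₀*rn^2/2 := by positivity
  have hQQrn : Q ≤ Q^2*rn := by nlinarith only [hQ2, hrn1, hQpos, hrn0]
  have hKT : ∀ x : ℝ, 0 ≤ x → x ≤ Q^2*rn → x/K ≤ T := by
    intro x hx hxQ
    have e1 : t₀^3 ≤ t₀ := by
      nlinarith only [ht₀, ht₀', mul_nonneg (mul_nonneg ht₀.le (sub_nonneg.2 ht₀'))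
        (by linarith only [ht₀] : (0:ℝ) ≤ 1 + t₀)]
    calc x/K ≤ (Q^2*rn)/(t₀*rn^2/2) := div_le_div₀ (by positivity) hxQ hKden hK2
      _ = 2*Q^2/(t₀*rn) := by field_simp [ht₀.ne', hrnpos.ne']
      _ ≤ T := by
          rw [hTdef, div_le_div_iff₀ (by positivity) (by positivity)]
          nlinarith only [e1, hQ2, hrn0, ht₀, hrnpos, hQpos,
            mul_nonneg (mul_nonneg (sq_nonneg Q) ht₀.le) hrn0,
            mul_nonneg (mul_nonneg (mul_nonneg (sq_nonneg Q) ht₀.le) hrn0)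
              (sub_nonneg.2 hQ2)]
  have hAT : ∀ m : ℝ, |m| ≤ 2*Q*rn → 4*|m|^3/K^2 ≤ T := by
    intro m hm
    have h3 : |m|^3 ≤ (2*Q*rn)^3 := pow_le_pow_left₀ (abs_nonneg m) hm 3
    have e1 : t₀^3 ≤ t₀^2 := by
      nlinarith only [mul_nonneg (sq_nonneg t₀) (sub_nonneg.2 ht₀')]
    calc 4*|m|^3/K^2 ≤ (4*(2*Q*rn)^3)/((t₀*rn^2/2)^2) :=
          div_le_div₀ (by positivity) (by linarith only [h3]) (pow_pos hKden 2)
            (pow_le_pow_left₀ hKden.le hK2 2)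
      _ = 128*Q^3/(t₀^2*rn) := by field_simp [ht₀.ne', hrnpos.ne']; ring
      _ ≤ T := by
          rw [hTdef, div_le_div_iff₀ (by positivity) (by positivity)]
          nlinarith only [e1, hrn0, hQpos,
            mul_nonneg (mul_nonneg (pow_nonneg hQpos.le 3) hrn0) (sub_nonneg.2 e1),
            mul_nonneg (mul_nonneg (pow_nonneg hQpos.le 3) (sq_nonneg t₀)) hrn0]
  -- the fourteen term bounds
  have hsK' : |s - K| ≤ M := by rw [abs_sub_comm]; exact hsK
  have hrn2' : (2:ℝ) ≤ rn := by linarith only [h16, hrn8]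
  have h1 : |E₁| ≤ T := hE₁.trans (hET _ (by rw [hNr]; linarith only [hKrn, ha0, hKpos]))
  have h2 : |E₂| ≤ T := hE₂.trans (hET _ (by rw [hpr]; linarith only [hKrn, hJ0, hc0]))
  have hQrn2 : rn ≤ Q*rn := by nlinarith only [hrn0, hQ2]
  have h3 : |E₃| ≤ T := hE₃.trans (hET _ (by
    rw [hqr]; linarith only [hKJ, hd0, hQrn2, mul_nonneg hQpos.le hrn0]))
  have hQrnnn : (0:ℝ) ≤ Q*rn := mul_nonneg hQpos.le hrn0
  have h4 : |A₁| ≤ T := by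
    refine hA₁.trans (le_trans ?_ (hAT a (by
      rw [abs_of_nonneg ha0]; linarith only [haQ, hQrn, hQrnnn])))
    refine div_le_div_of_nonneg_left (by positivity) (pow_pos hKpos 2) ?_
    nlinarith only [hKpos]
  have h5 : |A₂| ≤ T := hA₂.trans (hAT (J+(c:ℝ)) (by
    rw [abs_of_nonneg (by linarith only [hJ0, hc0])]
    linarith only [hJle, hcQ, hQrn]))
  have h6 : |A₃| ≤ T := hA₃.trans (hAT ((d:ℝ)-J) (by
    rw [abs_le]
    refine ⟨by linarith only [hJle, hQrnnn, hdQ, hQrn], by linarith only [hdQ, hQrn, hJ0, hQrnnn]⟩))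
  have hcdQ2 : (c:ℝ)+(d:ℝ)+2 ≤ Q := by rw [hQdef]; linarith only [ha0, hB, hM]
  have hco : |(c:ℝ)+(d:ℝ)+1/2-(a:ℝ)| ≤ Q := by
    rw [abs_le]
    constructor
    · linarith only [haQ, hc0, hd0]
    · linarith only [hcdQ2, ha0]
  have h7 : |((c:ℝ)+(d:ℝ)+1/2-(a:ℝ)) * lw| ≤ T := by
    calc |((c:ℝ)+(d:ℝ)+1/2-(a:ℝ)) * lw| = |(c:ℝ)+(d:ℝ)+1/2-(a:ℝ)| * |lw| := abs_mul _ _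
      _ ≤ Q * (2*(|s-K|/K)) := mul_le_mul hco hlw (abs_nonneg lw) hQpos.le
      _ = (2*Q*|s-K|)/K := by ring
      _ ≤ T := by
          refine hKT _ (by positivity) ?_
          nlinarith only [hsK', hMQ, hQpos, hrn2', abs_nonneg (s-K), sq_nonneg Q]
  have hza : |(a:ℝ)/(2*K)| ≤ 1/2 := by
    rw [abs_div, abs_of_nonneg ha0, abs_of_pos h2Kpos, div_le_iff₀ h2Kpos]
    linarith only [hmα, le_abs_self (a:ℝ)]
  have hlαb : |lα| ≤ 2*((a:ℝ)/(2*K)) := by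
    have := log1p_abs_bound hza
    rwa [abs_div, abs_of_nonneg ha0, abs_of_pos h2Kpos] at this
  have h8 : |(1/2) * lα| ≤ T := by
    calc |(1/2) * lα| = (1/2) * |lα| := by rw [abs_mul]; norm_num
      _ ≤ (1/2) * (2*((a:ℝ)/(2*K))) := by linarith only [hlαb, abs_nonneg lα]
      _ = ((a:ℝ)/2)/K := by ring
      _ ≤ T := hKT _ (by positivity) (by linarith only [haQ, hQQrn, ha0])
  have hzx : |(J+(c:ℝ))/K| ≤ 1/2 := by
    rw [abs_div, abs_of_pos hKpos, div_le_iff₀ hKpos]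
    calc |J+(c:ℝ)| ≤ K/2 := hmx
      _ = 1/2*K := by ring
  have hlxb : |lx| ≤ 2*((J+(c:ℝ))/K) := by
    have := log1p_abs_bound hzx
    rwa [abs_div, abs_of_nonneg (by linarith only [hJ0, hc0] : (0:ℝ) ≤ J+(c:ℝ)),
      abs_of_pos hKpos] at this
  have h9 : |(1/2) * lx| ≤ T := by
    calc |(1/2) * lx| = (1/2) * |lx| := by rw [abs_mul]; norm_num
      _ ≤ (J+(c:ℝ))/K := by linarith only [hlxb, abs_nonneg lx]
      _ ≤ T := hKT _ (by positivity) (by nlinarith only [hJle, hcQ, hQrn, hQ2, hrn0, hQpos])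
  have hzy : |((d:ℝ)-J)/K| ≤ 1/2 := by
    rw [abs_div, abs_of_pos hKpos, div_le_iff₀ hKpos]
    calc |(d:ℝ)-J| ≤ K/2 := hmy
      _ = 1/2*K := by ring
  have hlyb : |ly| ≤ 2*(|(d:ℝ)-J|/K) := by
    have := log1p_abs_bound hzy
    rwa [abs_div, abs_of_pos hKpos] at this
  have h10 : |(1/2) * ly| ≤ T := by
    calc |(1/2) * ly| = (1/2) * |ly| := by rw [abs_mul]; norm_num
      _ ≤ |(d:ℝ)-J|/K := by linarith only [hlyb, abs_nonneg ly]
      _ ≤ T := by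
          refine hKT _ (by positivity) ?_
          have : |(d:ℝ)-J| ≤ 2*(Q*rn) := by
            rw [abs_le]
            exact ⟨by linarith only [hJle, hQrnnn, hdQ, hQrn],
              by linarith only [hdQ, hQrn, hJ0, hQrnnn]⟩
          nlinarith only [this, hQ2, hrn0, hQpos, hQrnnn]
  have h11 : |2*b^2/t - J^2/K| ≤ T := by
    have heq : 2*b^2/t - J^2/K = J^2*(K-s)/(s*K) := by
      rw [hJ2, hsdef]
      have hnne : (n:ℝ) ≠ 0 := by linarith only [hn1]
      field_simp
    rw [heq, abs_div, abs_mul, abs_of_nonneg (sq_nonneg J), abs_of_pos (mul_pos hspos hKpos)]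
    have hnum : J^2*|K-s| ≤ (Q*rn)^2*Q := by
      have e1 : J^2 ≤ (Q*rn)^2 := pow_le_pow_left₀ hJ0 hJle 2
      have e2 : |K-s| ≤ Q := hsK.trans hMQ
      exact mul_le_mul e1 e2 (abs_nonneg _) (by positivity)
    have hden2 : t₀*rn^2*(t₀*rn^2/2) ≤ s*K := by
      refine mul_le_mul hs_low hK2 hKden.le (by linarith only [hspos])
    calc J^2*|K-s|/(s*K) ≤ ((Q*rn)^2*Q)/(t₀*rn^2*(t₀*rn^2/2)) :=
          div_le_div₀ (by positivity) hnum (by positivity) hden2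
      _ = 2*Q^3/(t₀^2*rn^2) := by field_simp [ht₀.ne', hrnpos.ne']
      _ ≤ T := by
          rw [hTdef, div_le_div_iff₀ (by positivity) (by positivity)]
          have e1 : t₀^3 ≤ t₀^2 := by
            nlinarith only [mul_nonneg (sq_nonneg t₀) (sub_nonneg.2 ht₀')]
          nlinarith only [e1, hrn1, hrn0, hQpos, ht₀,
            mul_nonneg (mul_nonneg (pow_nonneg hQpos.le 3) (sq_nonneg t₀)) hrn0,
            mul_nonneg (mul_nonneg (pow_nonneg hQpos.le 3) (sq_nonneg t₀))
              (mul_nonneg hrn0 (sub_nonneg.2 hrn1)),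
            mul_nonneg (mul_nonneg (pow_nonneg hQpos.le 3)
              (mul_nonneg (sq_nonneg t₀) (sub_nonneg.2 ht₀'))) (mul_nonneg hrn0 hrn0)]
  have h12 : |(a:ℝ)^2/(2*(2*K))| ≤ T := by
    rw [abs_of_nonneg (by positivity)]
    calc (a:ℝ)^2/(2*(2*K)) ≤ ((a:ℝ)^2/4)/K := by
          rw [show (2*(2*K)) = 4*K by ring]
          rw [div_le_div_iff₀ (by linarith only [hKpos]) hKpos]
          nlinarith only [sq_nonneg (a:ℝ), hKpos]
      _ ≤ T := by
          refine hKT _ (by positivity) ?_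
          nlinarith only [mul_nonneg (sub_nonneg.2 haQ) (by linarith only [ha0, haQ] : (0:ℝ) ≤ Q + a),
            mul_nonneg (sub_nonneg.2 hrn1) (sq_nonneg Q)]
  have h13 : |J*((c:ℝ)-(d:ℝ))/K| ≤ T := by
    rw [abs_div, abs_mul, abs_of_nonneg hJ0, abs_of_pos hKpos]
    refine hKT _ (by positivity) ?_
    have hcd : |(c:ℝ)-(d:ℝ)| ≤ Q := by
      rw [abs_le]
      exact ⟨by linarith only [hdQ, hc0], by linarith only [hcQ, hd0]⟩
    calc J*|(c:ℝ)-(d:ℝ)| ≤ (Q*rn)*Q := mul_le_mul hJle hcd (abs_nonneg _) hQrnnn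
      _ = Q^2*rn := by ring
  have h14 : |((c:ℝ)^2+(d:ℝ)^2)/(2*K)| ≤ T := by
    rw [abs_of_nonneg (by positivity)]
    calc ((c:ℝ)^2+(d:ℝ)^2)/(2*K) = (((c:ℝ)^2+(d:ℝ)^2)/2)/K := by ring
      _ ≤ T := by
          refine hKT _ (by positivity) ?_
          nlinarith only [mul_nonneg (sub_nonneg.2 hcQ) (by linarith only [hc0, hcQ] : (0:ℝ) ≤ Q + c),
            mul_nonneg (sub_nonneg.2 hdQ) (by linarith only [hd0, hdQ] : (0:ℝ) ≤ Q + d),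
            mul_nonneg (sub_nonneg.2 hrn1) (sq_nonneg Q)]
  -- assembling
  have habs : |Real.log R| ≤ |E₁| + |E₂| + |E₃| + |A₁| + |A₂| + |A₃|
      + |((c:ℝ)+(d:ℝ)+1/2-(a:ℝ)) * lw| + |(1/2) * lα| + |(1/2) * lx| + |(1/2) * ly|
      + |2*b^2/t - J^2/K| + |(a:ℝ)^2/(2*(2*K))| + |J*((c:ℝ)-(d:ℝ))/K|
      + |((c:ℝ)^2+(d:ℝ)^2)/(2*K)| := by
    rw [hlog]
    exact abs14 _ _ _ _ _ _ _ _ _ _ _ _ _ _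
  have h14T : 14 * T = C₁/rn := by
    rw [hTdef, hC₁def, div_div]
    ring
  have hlogRC : |Real.log R| ≤ C₁/rn := by
    rw [← h14T]
    linarith only [habs, h1, h2, h3, h4, h5, h6, h7, h8, h9, h10, h11, h12, h13, h14]
  have hlog1 : |Real.log R| ≤ 1 := hlogRC.trans (by rw [div_le_one hrnpos]; exact hrnC)
  calc |R - 1| = |Real.exp (Real.log R) - 1| := by rw [Real.exp_log hRpos]
    _ ≤ 2 * |Real.log R| := Real.abs_exp_sub_one_le hlog1
    _ ≤ 2 * (C₁/rn) := by linarith only [hlogRC]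
    _ = 2 * C₁ / rn := by ring
end

section
/- For all integers p ≥ 1, n ≥ 1, every integer m with 0 ≤ m ≤ 2n, and every e = (e_1,…,e_p) ∈ ℤ^p, the number of (p,2n)-watermelons without wall condition w = (w_1,…,w_p) satisfying w_i(m) = e_i for all i equals N̂(m,e) · N̂(2n−m,e). -/
/-- A star of length `m` without wall condition, with `p` branches, encoded as a
function `Fin p → ℕ → ℤ` (values beyond time `m` are pinned to `0` so that the
collection of stars is a finite set). Branch `i` (0-indexed) starts at `2i`. -/
def IsStarNW (p m : ℕ) (w : Fin p → ℕ → ℤ) : Prop :=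
  (∀ i : Fin p, w i 0 = 2 * ((i : ℕ) : ℤ)) ∧
  (∀ i : Fin p, ∀ k, k < m → (w i (k + 1) - w i k = 1 ∨ w i (k + 1) - w i k = -1)) ∧
  (∀ i j : Fin p, i < j → ∀ k, k ≤ m → w i k < w j k) ∧
  (∀ i : Fin p, ∀ k, m < k → w i k = 0)

/-- A `(p,2n)`-watermelon without wall condition: a star of length `2n` without wall
condition whose branches return to their starting points at time `2n`. -/
def IsMelonNW (p n : ℕ) (w : Fin p → ℕ → ℤ) : Prop :=
  IsStarNW p (2 * n) w ∧ ∀ i : Fin p, w i (2 * n) = 2 * ((i : ℕ) : ℤ)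

/-- `NHat p m e` is the number of stars of length `m` without wall condition ending at `e`. -/
noncomputable def NHat (p m : ℕ) (e : Fin p → ℤ) : ℕ :=
  Nat.card {w : Fin p → ℕ → ℤ // IsStarNW p m w ∧ ∀ i, w i m = e i}

/-- the number of `(p,2n)`-watermelons without wall condition passing
through `e` at time `m` equals `N̂(m,e) · N̂(2n−m,e)`. -/
theorem melonNW_count_through (p n m : ℕ) (hp : 1 ≤ p) (hn : 1 ≤ n) (hm : m ≤ 2 * n)
    (e : Fin p → ℤ) :
    Nat.card {w : Fin p → ℕ → ℤ // IsMelonNW p n w ∧ ∀ i, w i m = e i}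
      = NHat p m e * NHat p (2 * n - m) e := by
  rw [NHat, NHat, ← Nat.card_prod]
  refine Nat.card_congr ?_
  refine
    { toFun := fun w =>
        (⟨fun i k => if k ≤ m then w.1 i k else 0, ?_⟩,
         ⟨fun i k => if k ≤ 2 * n - m then w.1 i (2 * n - k) else 0, ?_⟩)
      invFun := fun uv =>
        ⟨fun i k => if k ≤ m then uv.1.1 i k
            else if k ≤ 2 * n then uv.2.1 i (2 * n - k) else 0, ?_⟩
      left_inv := ?_
      right_inv := ?_ }
  · -- first half is a star of length m ending at e
    obtain ⟨⟨⟨h0, hstep, hord, hbey⟩, hend⟩, hpass⟩ := w.2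
    refine ⟨⟨fun i => ?_, fun i k hk => ?_, fun i j hij k hk => ?_, fun i k hk => ?_⟩,
      fun i => ?_⟩
    · simp [h0 i]
    · have h1 : k + 1 ≤ m := hk
      simp only [if_pos h1, if_pos (Nat.le_of_succ_le h1)]
      exact hstep i k (by omega)
    · simp only [if_pos hk]
      exact hord i j hij k (by omega)
    · simp [Nat.not_le.mpr hk]
    · simp [hpass i]
  · -- reversed second half is a star of length 2n - m ending at e
    obtain ⟨⟨⟨h0, hstep, hord, hbey⟩, hend⟩, hpass⟩ := w.2
    refine ⟨⟨fun i => ?_, fun i k hk => ?_, fun i j hij k hk => ?_, fun i k hk => ?_⟩,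
      fun i => ?_⟩
    · simp [hend i]
    · have h1 : k + 1 ≤ 2 * n - m := hk
      simp only [if_pos h1, if_pos (Nat.le_of_succ_le h1)]
      have hs := hstep i (2 * n - (k + 1)) (by omega)
      rw [show 2 * n - (k + 1) + 1 = 2 * n - k from by omega] at hs
      omega
    · simp only [if_pos hk]
      exact hord i j hij (2 * n - k) (by omega)
    · simp [Nat.not_le.mpr hk]
    · simp only [if_pos (le_refl (2 * n - m)), show 2 * n - (2 * n - m) = m from by omega]
      exact hpass i
  · -- glued path is a melon passing through e
    obtain ⟨u, ⟨⟨hu0, hustep, huord, hubey⟩, huend⟩⟩ := uv.1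
    obtain ⟨v, ⟨⟨hv0, hvstep, hvord, hvbey⟩, hvend⟩⟩ := uv.2
    refine ⟨⟨⟨fun i => ?_, fun i k hk => ?_, fun i j hij k hk => ?_, fun i k hk => ?_⟩,
      fun i => ?_⟩, fun i => ?_⟩
    · simp [hu0 i]
    · by_cases h1 : k + 1 ≤ m
      · simp only [if_pos h1, if_pos (Nat.le_of_succ_le h1)]
        exact hustep i k (by omega)
      · by_cases h2 : k ≤ m
        · -- k = m, gluing point
          have hkm : k = m := by omega
          subst hkm
          simp only [if_neg h1, if_pos (show k + 1 ≤ 2 * n from by omega), if_pos le_rfl]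
          have hs := hvstep i (2 * n - (k + 1)) (by omega)
          rw [show 2 * n - (k + 1) + 1 = 2 * n - k from by omega] at hs
          have h3 := huend i
          have h4 := hvend i
          omega
        · simp only [if_neg h1, if_neg h2, if_pos (show k + 1 ≤ 2 * n from by omega),
            if_pos (show k ≤ 2 * n from by omega)]
          have hs := hvstep i (2 * n - (k + 1)) (by omega)
          rw [show 2 * n - (k + 1) + 1 = 2 * n - k from by omega] at hs
          omega
    · by_cases h1 : k ≤ m
      · simp only [if_pos h1]
        exact huord i j hij k h1
      · simp only [if_neg h1, if_pos hk]
        exact hvord i j hij (2 * n - k) (by omega)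
    · simp [Nat.not_le.mpr (show m < k from by omega),
        Nat.not_le.mpr (show 2 * n < k from hk)]
    · by_cases h : 2 * n ≤ m
      · have hm' : m = 2 * n := le_antisymm hm h
        simp only [if_pos h]
        have h1 := huend i
        have h2 := hvend i
        have h3 := hv0 i
        rw [hm'] at h1
        rw [show 2 * n - m = 0 from by omega] at h2
        omega
      · simp only [if_neg h, if_pos (le_refl (2 * n)), Nat.sub_self]
        exact hv0 i
    · simp only [if_pos (le_refl m)]
      exact huend i
  · -- left inverse
    rintro ⟨w, ⟨⟨⟨h0, hstep, hord, hbey⟩, hend⟩, hpass⟩⟩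
    apply Subtype.ext
    funext i k
    by_cases h1 : k ≤ m
    · simp [h1]
    · by_cases h2 : k ≤ 2 * n
      · simp only [if_neg h1, if_pos h2,
          if_pos (show 2 * n - k ≤ 2 * n - m from by omega),
          show 2 * n - (2 * n - k) = k from by omega]
      · simp only [if_neg h1, if_neg h2]
        exact (hbey i k (by omega)).symm
  · -- right inverse
    rintro ⟨⟨u, ⟨⟨hu0, hustep, huord, hubey⟩, huend⟩⟩,
            ⟨v, ⟨⟨hv0, hvstep, hvord, hvbey⟩, hvend⟩⟩⟩
    refine Prod.ext (Subtype.ext ?_) (Subtype.ext ?_)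
    · funext i k
      by_cases h1 : k ≤ m
      · simp [h1]
      · simp only [if_neg h1]
        exact (hubey i k (by omega)).symm
    · funext i k
      by_cases h1 : k ≤ 2 * n - m
      · by_cases h2 : 2 * n - k ≤ m
        · -- then 2n - k = m and k = 2n - m
          have hk1 : 2 * n - k = m := by omega
          have hk2 : k = 2 * n - m := by omega
          simp only [if_pos h1, if_pos h2, hk1]
          rw [hk2]
          have h3 := huend i
          have h4 := hvend i
          omega
        · simp only [if_pos h1, if_neg h2,
            if_pos (show 2 * n - k ≤ 2 * n from by omega),
            show 2 * n - (2 * n - k) = k from by omega]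
      · simp only [if_neg h1]
        exact (hvbey i k (by omega)).symm
end

section
/- Let p ≥ 1 be an integer and let x_1,…,x_p be real numbers whose squares are pairwise distinct. Then ∑_{k=1}^p ∑_{(i,j): i≠j, i≠k, j≠k} x_k² / ( (x_k² − x_j²)(x_k² − x_i²) ) = 0, where the inner sum ranges over all ordered pairs (i,j) of indices in {1,…,p} with i, j, k pairwise distinct. -/
theorem aux_sum_triple (p : ℕ) (f : Fin p → Fin p → Fin p → ℝ) :
    (∑ k : Fin p, ∑ i ∈ Finset.univ.erase k, ∑ j ∈ (Finset.univ.erase k).erase i, f k i j)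
      = ∑ t ∈ (Finset.univ.filter (fun t : Fin p × Fin p × Fin p =>
          t.1 ≠ t.2.1 ∧ t.1 ≠ t.2.2 ∧ t.2.1 ≠ t.2.2)), f t.1 t.2.1 t.2.2 := by
  rw [Finset.sum_filter, Fintype.sum_prod_type]
  refine Finset.sum_congr rfl fun k _ => ?_
  rw [Fintype.sum_prod_type]
  rw [← Finset.filter_ne' Finset.univ k, Finset.sum_filter]
  refine Finset.sum_congr rfl fun i _ => ?_
  by_cases hi : i = k
  · simp [hi]
  · rw [if_pos hi, ← Finset.filter_ne', Finset.filter_filter, Finset.sum_filter]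
    refine Finset.sum_congr rfl fun j _ => ?_
    refine if_congr ?_ rfl rfl
    constructor
    · rintro ⟨h2, h3⟩
      exact ⟨fun h => hi h.symm, fun h => h2 h.symm, fun h => h3 h.symm⟩
    · rintro ⟨h1, h2, h3⟩
      exact ⟨fun h => h2 h.symm, fun h => h3 h.symm⟩

theorem three_term_id (a b c : ℝ) (h1 : a - b ≠ 0) (h2 : a - c ≠ 0) (h3 : b - c ≠ 0) :
    a/((a-c)*(a-b)) + b/((b-a)*(b-c)) + c/((c-b)*(c-a)) = 0 := by
  have h4 : b - a ≠ 0 := fun h => h1 (by linarith [sub_eq_zero.mp h])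
  have h5 : c - a ≠ 0 := fun h => h2 (by linarith [sub_eq_zero.mp h])
  have h6 : c - b ≠ 0 := fun h => h3 (by linarith [sub_eq_zero.mp h])
  rw [div_add_div _ _ (mul_ne_zero h2 h1) (mul_ne_zero h4 h3),
    div_add_div _ _ (mul_ne_zero (mul_ne_zero h2 h1) (mul_ne_zero h4 h3)) (mul_ne_zero h6 h5),
    div_eq_zero_iff]
  left
  ring

/-- if `x_1², …, x_p²` are pairwise distinct, then
`∑_{k} ∑_{(i,j) : i,j,k pairwise distinct} x_k² / ((x_k² − x_j²)(x_k² − x_i²)) = 0`. -/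
theorem sum_triple_ratio_sq_eq_zero (p : ℕ) (hp : 1 ≤ p) (x : Fin p → ℝ)
    (hx : ∀ i j : Fin p, i ≠ j → (x i) ^ 2 ≠ (x j) ^ 2) :
    ∑ k : Fin p, ∑ i ∈ Finset.univ.erase k, ∑ j ∈ (Finset.univ.erase k).erase i,
        (x k) ^ 2 / (((x k) ^ 2 - (x j) ^ 2) * ((x k) ^ 2 - (x i) ^ 2))
      = 0 := by
  set g : Fin p → Fin p → Fin p → ℝ := fun k i j =>
    (x k) ^ 2 / (((x k) ^ 2 - (x j) ^ 2) * ((x k) ^ 2 - (x i) ^ 2)) with hg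
  set T : Finset (Fin p × Fin p × Fin p) :=
    Finset.univ.filter (fun t => t.1 ≠ t.2.1 ∧ t.1 ≠ t.2.2 ∧ t.2.1 ≠ t.2.2) with hT
  have hmem : ∀ t : Fin p × Fin p × Fin p, t ∈ T ↔
      t.1 ≠ t.2.1 ∧ t.1 ≠ t.2.2 ∧ t.2.1 ≠ t.2.2 := by
    intro t; simp [hT]
  rw [aux_sum_triple p g]
  set S : ℝ := ∑ t ∈ T, g t.1 t.2.1 t.2.2 with hS
  have h2 : S = ∑ t ∈ T, g t.2.1 t.2.2 t.1 := by
    refine Finset.sum_nbij' (i := fun t => (t.2.2, t.1, t.2.1))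
      (j := fun t => (t.2.1, t.2.2, t.1)) ?_ ?_ ?_ ?_ ?_
    · rintro ⟨k, i, j⟩ ht
      rw [hmem] at ht ⊢
      obtain ⟨a1, a2, a3⟩ := ht
      exact ⟨Ne.symm a2, Ne.symm a3, a1⟩
    · rintro ⟨k, i, j⟩ ht
      rw [hmem] at ht ⊢
      obtain ⟨a1, a2, a3⟩ := ht
      exact ⟨a3, Ne.symm a1, Ne.symm a2⟩
    · rintro ⟨k, i, j⟩ _; rfl
    · rintro ⟨k, i, j⟩ _; rfl
    · rintro ⟨k, i, j⟩ _; rfl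
  have h3 : S = ∑ t ∈ T, g t.2.2 t.1 t.2.1 := by
    refine Finset.sum_nbij' (i := fun t => (t.2.1, t.2.2, t.1))
      (j := fun t => (t.2.2, t.1, t.2.1)) ?_ ?_ ?_ ?_ ?_
    · rintro ⟨k, i, j⟩ ht
      rw [hmem] at ht ⊢
      obtain ⟨a1, a2, a3⟩ := ht
      exact ⟨a3, Ne.symm a1, Ne.symm a2⟩
    · rintro ⟨k, i, j⟩ ht
      rw [hmem] at ht ⊢
      obtain ⟨a1, a2, a3⟩ := ht
      exact ⟨Ne.symm a2, Ne.symm a3, a1⟩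
    · rintro ⟨k, i, j⟩ _; rfl
    · rintro ⟨k, i, j⟩ _; rfl
    · rintro ⟨k, i, j⟩ _; rfl
  have key : S + S + S = 0 := by
    nth_rewrite 2 [h2]
    nth_rewrite 2 [h3]
    rw [← Finset.sum_add_distrib, ← Finset.sum_add_distrib]
    refine Finset.sum_eq_zero fun t ht => ?_
    rw [hmem] at ht
    obtain ⟨h1, h2', h3'⟩ := ht
    have d1 := sub_ne_zero.mpr (hx t.1 t.2.1 h1)
    have d2 := sub_ne_zero.mpr (hx t.1 t.2.2 h2')
    have d3 := sub_ne_zero.mpr (hx t.2.1 t.2.2 h3')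
    exact three_term_id ((x t.1)^2) ((x t.2.1)^2) ((x t.2.2)^2) d1 d2 d3
  linarith
end

section
/- For every integer k ≥ 1: (i) ∫∫_{0 ≤ u_1 ≤ u_2 < ∞} u_1^{2k} · (u_2² − u_1²)² · u_1² u_2² · exp(−(u_1² + u_2²)/2) du_1 du_2 = 2(3 − k)(k+1)! + ( (k² + k + 3)(2k+2)! / ( (k+1)! · 2^{k+1} ) ) · ( π − 2 ∑_{j=1}^{k+1} 2^j / ( j · C(2j, j) ) ), and (ii) ∫∫_{0 ≤ u_1 ≤ u_2 < ∞} u_2^{2k} · (u_2² − u_1²)² · u_1² u_2² · exp(−(u_1² + u_2²)/2) du_1 du_2 = −2(3 − k)(k+1)! + ( (k² + k + 3)(2k+2)! / ( (k+1)! · 2^{k+1} ) ) · ( π + 2 ∑_{j=1}^{k+1} 2^j / ( j · C(2j, j) ) ). (Equivalently, these give the even moments E[X_1(t)^{2k}] and E[X_2(t)^{2k}] of the two branches of the continuous 2-watermelon with wall condition at time t after multiplying by (t(1−t))^k/(3π), where (X_1(t),X_2(t)) has density f(t;·).) -/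
open MeasureTheory Set Filter Real

noncomputable def phi (n : ℕ) (v : ℝ) : ℝ := v ^ n * Real.exp (-v ^ 2 / 2)

lemma pow_le_factorial_mul_exp (n : ℕ) {x : ℝ} (hx : 0 ≤ x) :
    x ^ n ≤ n.factorial * Real.exp x := by
  have h1 : x ^ n / n.factorial ≤ ∑ i ∈ Finset.range (n+1), x ^ i / i.factorial := by
    exact Finset.single_le_sum (f := fun i => x ^ i / (i.factorial : ℝ))
      (fun i _ => by positivity) (Finset.self_mem_range_succ n)
  have h2 := Real.sum_le_exp_of_nonneg hx (n+1)
  have h3 : x ^ n / n.factorial ≤ Real.exp x := le_trans h1 h2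
  have hf : (0:ℝ) < n.factorial := by exact_mod_cast n.factorial_pos
  calc x ^ n = n.factorial * (x ^ n / n.factorial) := by field_simp
    _ ≤ n.factorial * Real.exp x := by
        exact mul_le_mul_of_nonneg_left h3 hf.le

lemma phi_bound (n : ℕ) (x : ℝ) :
    ‖phi n x‖ ≤ (n.factorial * Real.exp 1) * Real.exp (-(1/4) * x ^ 2) := by
  have h1 : ‖phi n x‖ = |x| ^ n * Real.exp (-x ^ 2 / 2) := by
    rw [phi, norm_mul, norm_pow, Real.norm_eq_abs, Real.norm_eq_abs,
      abs_of_pos (Real.exp_pos _)]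
  rw [h1]
  have h2 : |x| ^ n ≤ n.factorial * Real.exp |x| := pow_le_factorial_mul_exp n (abs_nonneg x)
  have h3 : |x| ^ n * Real.exp (-x ^ 2 / 2) ≤
      (n.factorial * Real.exp |x|) * Real.exp (-x ^ 2 / 2) :=
    mul_le_mul_of_nonneg_right h2 (Real.exp_pos _).le
  refine h3.trans ?_
  rw [mul_assoc, mul_assoc, ← Real.exp_add, ← Real.exp_add]
  have h4 : |x| + -x ^ 2 / 2 ≤ 1 + -(1/4) * x ^ 2 := by
    nlinarith [sq_nonneg (|x| - 2), sq_abs x]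
  exact mul_le_mul_of_nonneg_left (Real.exp_le_exp.2 h4) (by positivity)

lemma integrable_phi (n : ℕ) : Integrable (phi n) := by
  refine Integrable.mono' (((integrable_exp_neg_mul_sq
    (by norm_num : (0:ℝ) < 1/4)).const_mul (n.factorial * Real.exp 1))) ?_ ?_
  · exact ((continuous_pow n).mul (Real.continuous_exp.comp
      (by continuity))).aestronglyMeasurable
  · exact Eventually.of_forall (phi_bound n)

lemma tendsto_phi : ∀ n : ℕ, Tendsto (phi n) atTop (nhds 0) := by
  intro n
  apply squeeze_zero_norm (phi_bound n)
  have h : Tendsto (fun x : ℝ => -(1/4) * x ^ 2) atTop atBot := by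
    apply Tendsto.const_mul_atTop_of_neg (by norm_num)
    exact tendsto_pow_atTop (by norm_num)
  have := (Real.tendsto_exp_atBot.comp h).const_mul ((n.factorial : ℝ) * Real.exp 1)
  simpa using this


variable {n : ℕ}

lemma continuous_phi (n : ℕ) : Continuous (phi n) := by
  unfold phi; continuity

noncomputable def Gt (n : ℕ) (u : ℝ) : ℝ := ∫ v in Set.Ioi u, phi n v

lemma Gt_eq (n : ℕ) (u : ℝ) : Gt n u = Gt n 0 - ∫ v in (0:ℝ)..u, phi n v := by
  rcases le_or_gt 0 u with h | h
  · have hsplit : Ioc 0 u ∪ Ioi u = Ioi (0:ℝ) := Ioc_union_Ioi_eq_Ioi h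
    have h1 : Gt n 0 = (∫ v in Ioc (0:ℝ) u, phi n v) + ∫ v in Ioi u, phi n v := by
      rw [Gt, ← hsplit]
      exact (setIntegral_union (Ioc_disjoint_Ioi le_rfl) measurableSet_Ioi
        (integrable_phi n).integrableOn (integrable_phi n).integrableOn)
    rw [intervalIntegral.integral_of_le h, Gt]
    rw [h1]; ring
  · have hsplit : Ioc u 0 ∪ Ioi 0 = Ioi u := Ioc_union_Ioi_eq_Ioi h.le
    have h1 : Gt n u = (∫ v in Ioc u (0:ℝ), phi n v) + ∫ v in Ioi 0, phi n v := by
      rw [Gt, ← hsplit]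
      exact (setIntegral_union (Ioc_disjoint_Ioi le_rfl) measurableSet_Ioi
        (integrable_phi n).integrableOn (integrable_phi n).integrableOn)
    rw [intervalIntegral.integral_of_ge h.le, h1, Gt]
    ring

lemma hasDerivAt_Gt (n : ℕ) (u : ℝ) : HasDerivAt (Gt n) (-(phi n u)) u := by
  have h : HasDerivAt (fun x => ∫ v in (0:ℝ)..x, phi n v) (phi n u) u := by
    apply intervalIntegral.integral_hasDerivAt_right
      ((integrable_phi n).intervalIntegrable)
      ((continuous_phi n).stronglyMeasurableAtFilter _ _)
      (continuous_phi n).continuousAt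
  have h2 := (hasDerivAt_const u (Gt n 0)).sub h
  simp only [zero_sub] at h2
  exact h2.congr_of_eventuallyEq (Eventually.of_forall fun x => (Gt_eq n x))

lemma continuous_Gt (n : ℕ) : Continuous (Gt n) :=
  (hasDerivAt_Gt n · |>.continuousAt) |> continuous_iff_continuousAt.2

lemma tendsto_Gt (n : ℕ) : Tendsto (Gt n) atTop (nhds 0) := by
  have h := intervalIntegral_tendsto_integral_Ioi 0
    (integrable_phi n).integrableOn (tendsto_id (α := ℝ))
  have h2 : Tendsto (fun u : ℝ => Gt n 0 - ∫ v in (0:ℝ)..u, phi n v) atTop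
      (nhds (Gt n 0 - Gt n 0)) := tendsto_const_nhds.sub h
  simp only [sub_self] at h2
  exact h2.congr (fun u => (Gt_eq n u).symm)

lemma Gt_bound (n : ℕ) (u : ℝ) : ‖Gt n u‖ ≤ ∫ v, ‖phi n v‖ := by
  calc ‖Gt n u‖ ≤ ∫ v in Set.Ioi u, ‖phi n v‖ := norm_integral_le_integral_norm _
    _ ≤ ∫ v, ‖phi n v‖ := by
        apply setIntegral_le_integral (integrable_phi n).norm
        exact Eventually.of_forall fun x => norm_nonneg _

-- recursion for Gt

lemma Gt_rec (n : ℕ) (u : ℝ) :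
    Gt (n + 2) u = (n + 1) * Gt n u + phi (n + 1) u := by
  have hderiv : ∀ x ∈ Ici u, HasDerivAt (fun v => -(phi (n+1) v))
      (phi (n+2) x - (n+1) * phi n x) x := by
    intro x _
    have h1 : HasDerivAt (fun v : ℝ => v ^ (n+1)) ((n+1) * x ^ n) x := by
      simpa using (hasDerivAt_pow (n+1) x)
    have h2 : HasDerivAt (fun v : ℝ => Real.exp (-v ^ 2 / 2)) (-x * Real.exp (-x ^ 2 / 2)) x := by
      have h3 : HasDerivAt (fun v : ℝ => -v ^ 2 / 2) (-x) x := by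
        have := ((hasDerivAt_pow 2 x).neg).div_const 2
        simpa using this.congr_deriv (by ring)
      simpa [mul_comm] using h3.exp
    have := (h1.mul h2).neg
    apply this.congr_deriv
    simp only [phi]
    ring
  have hint : IntegrableOn (fun x => phi (n+2) x - (n+1) * phi n x) (Ioi u) :=
    ((integrable_phi (n+2)).sub ((integrable_phi n).const_mul _)).integrableOn
  have htend : Tendsto (fun v => -(phi (n+1) v)) atTop (nhds 0) := by
    simpa using (tendsto_phi (n+1)).neg
  have key := integral_Ioi_of_hasDerivAt_of_tendsto' hderiv hint htend
  rw [integral_sub (integrable_phi (n+2)).integrableOn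
    ((integrable_phi n).integrableOn.const_mul _)] at key
  simp only [integral_const_mul] at key
  show (∫ v in Set.Ioi u, phi (n+2) v) = (n + 1 : ℝ) * (∫ v in Set.Ioi u, phi n v) + phi (n+1) u
  linarith [key]

noncomputable def Tm (m n : ℕ) : ℝ := ∫ u in Set.Ioi (0:ℝ), phi m u * Gt n u

lemma integrable_phiGt (m n : ℕ) : Integrable (fun u => Gt n u * phi m u) := by
  apply (integrable_phi m).bdd_mul (continuous_Gt n).aestronglyMeasurable
  exact Eventually.of_forall (Gt_bound n)

lemma integrable_phiGt' (m n : ℕ) : Integrable (fun u => phi m u * Gt n u) := by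
  simpa [mul_comm] using integrable_phiGt m n

-- phi m u * phi n u = u^(m+n) * exp (-u^2)

lemma phi_mul_phi (m n : ℕ) (u : ℝ) :
    phi m u * phi n u = u ^ (m + n) * Real.exp (-u ^ 2) := by
  simp only [phi]
  rw [mul_mul_mul_comm, ← Real.exp_add, ← pow_add]
  congr 1
  ring

-- integrability of u^p * exp(-u^2)

lemma integrable_psi (p : ℕ) : Integrable (fun u : ℝ => u ^ p * Real.exp (-u ^ 2)) := by
  have hm : AEStronglyMeasurable (fun u : ℝ => Real.exp (-u^2/2)) volume :=
    (Real.continuous_exp.comp (by continuity)).aestronglyMeasurable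
  have hb : ∃ C, ∀ u : ℝ, ‖Real.exp (-u^2/2)‖ ≤ C := by
    refine ⟨1, fun u => ?_⟩
    rw [Real.norm_eq_abs, abs_of_pos (Real.exp_pos _)]
    exact Real.exp_le_one_iff.2 (by nlinarith [sq_nonneg u])
  have h := Integrable.bdd_mul (integrable_phi p) hm (Eventually.of_forall hb.choose_spec)
  apply h.congr
  refine Eventually.of_forall fun u => ?_
  show Real.exp (-u^2/2) * phi p u = _
  simp only [phi]
  rw [mul_comm (Real.exp (-u^2/2)), mul_assoc, ← Real.exp_add]
  congr 2
  ring

noncomputable def Bq (p : ℕ) : ℝ := ∫ u in Set.Ioi (0:ℝ), u ^ p * Real.exp (-u ^ 2)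

lemma tendsto_psi (p : ℕ) :
    Tendsto (fun u : ℝ => u ^ p * Real.exp (-u ^ 2)) atTop (nhds 0) := by
  have h := tendsto_phi p
  have hb : ∀ᶠ u in atTop, ‖u ^ p * Real.exp (-u ^ 2)‖ ≤ ‖phi p u‖ := by
    filter_upwards [eventually_ge_atTop (0:ℝ)] with u hu
    simp only [phi, norm_mul, norm_pow, Real.norm_eq_abs,
      abs_of_pos (Real.exp_pos _)]
    have hle : Real.exp (-u^2) ≤ Real.exp (-u^2/2) :=
      Real.exp_le_exp.2 (by nlinarith [sq_nonneg u])
    exact mul_le_mul_of_nonneg_left hle (by positivity)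
  exact squeeze_zero_norm' hb (by simpa using (tendsto_phi p).norm)

-- Bq recursion and values

lemma Bq_one : Bq 1 = 1 / 2 := by
  have hderiv : ∀ x ∈ Ici (0:ℝ), HasDerivAt (fun u : ℝ => -Real.exp (-u ^ 2) / 2)
      (x ^ 1 * Real.exp (-x ^ 2)) x := by
    intro x _
    have h1 : HasDerivAt (fun u : ℝ => -u ^ 2) (-(2*x)) x := by
      simpa using (hasDerivAt_pow 2 x).fun_neg
    have := (h1.exp.neg).div_const 2
    apply this.congr_deriv; ring
  have hint := (integrable_psi 1).integrableOn (s := Ioi (0:ℝ))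
  have htend : Tendsto (fun u : ℝ => -Real.exp (-u ^ 2) / 2) atTop (nhds 0) := by
    have := ((tendsto_psi 0).const_mul (-(1:ℝ)/2))
    rw [mul_zero] at this
    apply this.congr
    intro u; simp only [pow_zero, one_mul]; ring
  have key := integral_Ioi_of_hasDerivAt_of_tendsto' hderiv hint htend
  rw [Bq, key]; norm_num

lemma Bq_rec (q : ℕ) : Bq (2*q+3) = (q+1) * Bq (2*q+1) := by
  have hderiv : ∀ x ∈ Ici (0:ℝ), HasDerivAt (fun u : ℝ => -(u^(2*q+2) * Real.exp (-u ^ 2)) / 2)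
      (x^(2*q+3) * Real.exp (-x^2) - (q+1) * (x^(2*q+1) * Real.exp (-x^2))) x := by
    intro x _
    have h1 : HasDerivAt (fun u : ℝ => u ^ (2*q+2)) ((2*q+2) * x ^ (2*q+1)) x := by
      simpa using (hasDerivAt_pow (2*q+2) x)
    have h2 : HasDerivAt (fun u : ℝ => Real.exp (-u ^ 2)) (-(2*x) * Real.exp (-x ^ 2)) x := by
      have h3 : HasDerivAt (fun u : ℝ => -u ^ 2) (-(2*x)) x := by
        simpa using (hasDerivAt_pow 2 x).fun_neg
      simpa [mul_comm] using h3.exp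
    have := ((h1.mul h2).neg).div_const 2
    apply this.congr_deriv
    push_cast
    ring
  have hint : IntegrableOn (fun x : ℝ => x^(2*q+3) * Real.exp (-x^2)
      - (q+1) * (x^(2*q+1) * Real.exp (-x^2))) (Ioi 0) :=
    ((integrable_psi _).sub ((integrable_psi _).const_mul _)).integrableOn
  have htend : Tendsto (fun u : ℝ => -(u^(2*q+2) * Real.exp (-u ^ 2)) / 2) atTop (nhds 0) := by
    have := ((tendsto_psi (2*q+2)).const_mul (-(1:ℝ)/2))
    rw [mul_zero] at this
    apply this.congr
    intro u; ring
  have key := integral_Ioi_of_hasDerivAt_of_tendsto' hderiv hint htend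
  rw [integral_sub (integrable_psi _).integrableOn
    ((integrable_psi _).integrableOn.const_mul _), integral_const_mul] at key
  have : Bq (2*q+3) - (q+1) * Bq (2*q+1) = 0 := by
    rw [Bq, Bq]; rw [key]; norm_num
  linarith

lemma Bq_val (q : ℕ) : Bq (2*q+1) = q.factorial / 2 := by
  induction q with
  | zero => simpa using Bq_one
  | succ q ih =>
      have h : 2*(q+1)+1 = 2*q+3 := by ring
      rw [h, Bq_rec q, ih]
      rw [Nat.factorial_succ]
      push_cast
      ring

-- derivative of phi

lemma hasDerivAt_phi (n : ℕ) (x : ℝ) :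
    HasDerivAt (phi (n+1)) ((n+1) * phi n x - phi (n+2) x) x := by
  have h1 : HasDerivAt (fun v : ℝ => v ^ (n+1)) ((n+1) * x ^ n) x := by
    simpa using (hasDerivAt_pow (n+1) x)
  have h2 : HasDerivAt (fun v : ℝ => Real.exp (-v ^ 2 / 2)) (-x * Real.exp (-x ^ 2 / 2)) x := by
    have h3 : HasDerivAt (fun v : ℝ => -v ^ 2 / 2) (-x) x := by
      have := ((hasDerivAt_pow 2 x).neg).div_const 2
      simpa using this.congr_deriv (by ring)
    simpa [mul_comm] using h3.exp
  have := h1.mul h2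
  apply this.congr_deriv
  simp only [phi]
  ring

-- recursion in n

lemma Tm_rec_n (m n : ℕ) : Tm m (n+2) = (n+1) * Tm m n + Bq (m+n+1) := by
  have hpt : ∀ u : ℝ, phi m u * Gt (n+2) u
      = (n+1) * (phi m u * Gt n u) + u ^ (m+n+1) * Real.exp (-u^2) := by
    intro u
    rw [Gt_rec n u, mul_add, phi_mul_phi m (n+1) u]
    ring
  rw [Tm]
  rw [setIntegral_congr_fun measurableSet_Ioi (fun u _ => hpt u)]
  rw [integral_add (((integrable_phiGt' m n).const_mul _).integrableOn)
    (integrable_psi _).integrableOn, integral_const_mul]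
  rfl

-- recursion in m

lemma Tm_rec_m (m n : ℕ) : Tm (m+2) n = (m+1) * Tm m n - Bq (m+n+1) := by
  have hderiv : ∀ x ∈ Ici (0:ℝ), HasDerivAt (fun u => -(phi (m+1) u * Gt n u))
      (phi (m+2) x * Gt n x - (m+1) * (phi m x * Gt n x) + x^(m+n+1) * Real.exp (-x^2)) x := by
    intro x _
    have h1 := (hasDerivAt_phi m x).mul (hasDerivAt_Gt n x)
    have := h1.neg
    apply this.congr_deriv
    have h2 : phi (m+1) x * phi n x = x^(m+n+1) * Real.exp (-x^2) := by
      rw [phi_mul_phi]; ring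
    rw [← h2]
    ring
  have hint : IntegrableOn (fun x => phi (m+2) x * Gt n x - (m+1) * (phi m x * Gt n x)
      + x^(m+n+1) * Real.exp (-x^2)) (Ioi 0) :=
    (((integrable_phiGt' (m+2) n).sub ((integrable_phiGt' m n).const_mul _)).add
      (integrable_psi _)).integrableOn
  have htend : Tendsto (fun u => -(phi (m+1) u * Gt n u)) atTop (nhds 0) := by
    have := ((tendsto_phi (m+1)).mul (tendsto_Gt n)).neg
    simpa using this
  have key := integral_Ioi_of_hasDerivAt_of_tendsto' hderiv hint htend
  have h0 : phi (m+1) 0 * Gt n 0 = 0 := by simp [phi]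
  rw [h0] at key
  have hA : IntegrableOn (fun x => phi (m+2) x * Gt n x - (↑m+1) * (phi m x * Gt n x))
      (Ioi (0:ℝ)) volume :=
    ((integrable_phiGt' (m+2) n).sub ((integrable_phiGt' m n).const_mul _)).integrableOn
  have hB := (integrable_psi (m+n+1)).integrableOn (s := Ioi (0:ℝ))
  rw [integral_add hA hB, integral_sub (integrable_phiGt' (m+2) n).integrableOn
      ((integrable_phiGt' m n).const_mul _).integrableOn, integral_const_mul] at key
  simp only [neg_zero, sub_zero, zero_sub, neg_neg] at key
  rw [Tm, Tm, Bq]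
  linarith [key]

-- base value

lemma Tm_zero_zero : Tm 0 0 = Real.pi / 4 := by
  have hderiv : ∀ x ∈ Ici (0:ℝ), HasDerivAt (fun u => -(Gt 0 u ^ 2 / 2))
      (phi 0 x * Gt 0 x) x := by
    intro x _
    have h1 := ((hasDerivAt_Gt 0 x).pow 2).div_const 2
    have := h1.neg
    apply this.congr_deriv
    ring
  have hint := (integrable_phiGt' 0 0).integrableOn (s := Ioi (0:ℝ))
  have htend : Tendsto (fun u => -(Gt 0 u ^ 2 / 2)) atTop (nhds 0) := by
    have := (((tendsto_Gt 0).pow 2).div_const 2).neg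
    simpa using this
  have key := integral_Ioi_of_hasDerivAt_of_tendsto' hderiv hint htend
  have hG0 : Gt 0 0 = Real.sqrt (Real.pi / (1/2)) / 2 := by
    rw [Gt]
    have : ∀ v : ℝ, phi 0 v = Real.exp (-(1/2) * v^2) := by
      intro v; simp [phi]; congr 1; ring
    rw [setIntegral_congr_fun measurableSet_Ioi (fun v _ => this v)]
    exact integral_gaussian_Ioi (1/2)
  rw [Tm, key, hG0]
  rw [div_pow, Real.sq_sqrt (by positivity : (0:ℝ) ≤ Real.pi / (1/2))]
  norm_num
  ring

lemma integrand_eq (m n : ℕ) (q : ℝ × ℝ) :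
    q.1 ^ m * q.2 ^ n * Real.exp (-(q.1 ^ 2 + q.2 ^ 2) / 2) = phi m q.1 * phi n q.2 := by
  have h : (-(q.1 ^ 2 + q.2 ^ 2) / 2) = (-q.1 ^ 2 / 2) + (-q.2 ^ 2 / 2) := by ring
  rw [h, Real.exp_add, phi, phi]
  ring

lemma hS_meas : MeasurableSet {q : ℝ × ℝ | 0 ≤ q.1 ∧ q.1 ≤ q.2} :=
  (measurableSet_le measurable_const measurable_fst).inter
    (measurableSet_le measurable_fst measurable_snd)

lemma integrable_prod_mono (m n : ℕ) :
    Integrable (fun q : ℝ × ℝ => phi m q.1 * phi n q.2) := by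
  rw [Measure.volume_eq_prod]
  exact (integrable_phi m).mul_prod (integrable_phi n)

lemma fub (m n : ℕ) :
    (∫ q in {q : ℝ × ℝ | 0 ≤ q.1 ∧ q.1 ≤ q.2},
      q.1 ^ m * q.2 ^ n * Real.exp (-(q.1 ^ 2 + q.2 ^ 2) / 2)) = Tm m n := by
  rw [setIntegral_congr_fun hS_meas (fun q _ => integrand_eq m n q)]
  rw [← integral_indicator hS_meas]
  have hInd : Integrable ({q : ℝ × ℝ | 0 ≤ q.1 ∧ q.1 ≤ q.2}.indicator
      (fun q : ℝ × ℝ => phi m q.1 * phi n q.2)) :=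
    (integrable_prod_mono m n).indicator hS_meas
  rw [Measure.volume_eq_prod] at hInd ⊢
  rw [integral_prod _ hInd]
  have inner : ∀ x : ℝ,
      (∫ y, ({q : ℝ × ℝ | 0 ≤ q.1 ∧ q.1 ≤ q.2}.indicator
        (fun q : ℝ × ℝ => phi m q.1 * phi n q.2)) (x, y))
      = Set.indicator (Ici (0:ℝ)) (fun x => phi m x * Gt n x) x := by
    intro x
    rcases le_or_gt 0 x with hx | hx
    · rw [Set.indicator_of_mem (mem_Ici.2 hx)]
      have hy : ∀ y : ℝ, ({q : ℝ × ℝ | 0 ≤ q.1 ∧ q.1 ≤ q.2}.indicator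
          (fun q : ℝ × ℝ => phi m q.1 * phi n q.2)) (x, y)
          = Set.indicator (Ici x) (fun y => phi m x * phi n y) y := by
        intro y
        by_cases h : x ≤ y
        · rw [Set.indicator_of_mem (mem_Ici.2 h), Set.indicator_of_mem (by exact ⟨hx, h⟩)]
        · rw [Set.indicator_of_notMem (fun hm => h (mem_Ici.1 hm)), Set.indicator_of_notMem
            (fun hmem => h hmem.2)]
      simp_rw [hy]
      rw [integral_indicator measurableSet_Ici, integral_Ici_eq_integral_Ioi,
        integral_const_mul]
      rfl
    · rw [Set.indicator_of_notMem (by simpa using hx.not_ge)]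
      have hy : ∀ y : ℝ, ({q : ℝ × ℝ | 0 ≤ q.1 ∧ q.1 ≤ q.2}.indicator
          (fun q : ℝ × ℝ => phi m q.1 * phi n q.2)) (x, y) = 0 := by
        intro y
        exact Set.indicator_of_notMem (fun hmem => hx.not_ge hmem.1) _
      simp_rw [hy]
      simp
  simp_rw [inner]
  rw [integral_indicator measurableSet_Ici, integral_Ici_eq_integral_Ioi]
  rfl

noncomputable def Dd : ℕ → ℝ
  | 0 => 1
  | (a+1) => (2*a+1) * Dd a

noncomputable def sS : ℕ → ℝ
  | 0 => 0
  | (a+1) => sS a + (a.factorial : ℝ) / Dd (a+1)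

lemma Dd_pos (a : ℕ) : 0 < Dd a := by
  induction a with
  | zero => norm_num [Dd]
  | succ a ih => rw [Dd]; positivity

lemma Bq_val' (q : ℕ) (p : ℕ) (hp : p = 2*q+1) : Bq p = q.factorial / 2 := by
  rw [hp]; exact Bq_val q

lemma Tm_rec_m' (m n m2 p : ℕ) (hm : m2 = m+2) (hp : p = m+n+1) :
    Tm m2 n = (m+1) * Tm m n - Bq p := by subst hm hp; exact Tm_rec_m m n

lemma Tm_rec_n' (m n n2 p : ℕ) (hn : n2 = n+2) (hp : p = m+n+1) :
    Tm m n2 = (n+1) * Tm m n + Bq p := by subst hn hp; exact Tm_rec_n m n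

-- base values

lemma Tm02 : Tm 0 2 = Real.pi / 4 + 1/2 := by
  have h := Tm_rec_n 0 0
  rw [Tm_zero_zero, Bq_val' 0 (0+0+1) rfl] at h
  simpa using h

lemma Tm04 : Tm 0 4 = 3 * Real.pi / 4 + 2 := by
  have h := Tm_rec_n 0 2
  rw [Tm02, Bq_val' 1 (0+2+1) rfl] at h
  norm_num [Nat.factorial] at h
  rw [h]; ring

lemma Tm06 : Tm 0 6 = 15 * Real.pi / 4 + 11 := by
  have h := Tm_rec_n 0 4
  rw [Tm04, Bq_val' 2 (0+4+1) rfl] at h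
  norm_num [Nat.factorial] at h
  rw [h]; ring

lemma hf1R (a : ℕ) : ((a+1).factorial : ℝ) = ((a:ℝ)+1) * (a.factorial : ℝ) := by
  rw [Nat.factorial_succ]; push_cast; ring

lemma hf2R (a : ℕ) : ((a+2).factorial : ℝ) = ((a:ℝ)+2) * ((a:ℝ)+1) * (a.factorial : ℝ) := by
  rw [Nat.factorial_succ, Nat.factorial_succ]; push_cast; ring

lemma hf3R (a : ℕ) : ((a+3).factorial : ℝ)
    = ((a:ℝ)+3) * ((a:ℝ)+2) * ((a:ℝ)+1) * (a.factorial : ℝ) := by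
  rw [Nat.factorial_succ, Nat.factorial_succ, Nat.factorial_succ]; push_cast; ring

lemma DdS (a : ℕ) : Dd (a+1) = (2*(a:ℝ)+1) * Dd a := by rw [Dd]

lemma sSS (a : ℕ) : sS (a+1) = sS a + (a.factorial : ℝ) / Dd (a+1) := by rw [sS]

lemma U1 (a : ℕ) : Tm (2*a) 2 = Dd a * Real.pi / 4
    + (a.factorial : ℝ) / 2 - Dd a * sS a / 2 := by
  induction a with
  | zero => have := Tm02; simp [Dd, sS, Nat.factorial]; linarith
  | succ a ih =>
      have h := Tm_rec_m' (2*a) 2 (2*(a+1)) (2*a+3) (by omega) (by omega)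
      have hb : Bq (2*a+3) = ((a+1).factorial : ℝ) / 2 := Bq_val' (a+1) _ (by omega)
      rw [h, hb, ih, sSS, DdS, hf1R]
      have hDa := (Dd_pos a).ne'
      have h21 : (2*(a:ℝ)+1) ≠ 0 := by positivity
      push_cast
      field_simp
      ring

lemma U2 (a : ℕ) : Tm (2*a) 4 = 3 * Dd a * Real.pi / 4
    + ((a:ℝ) + 4) * (a.factorial : ℝ) / 2 - 3 * Dd a * sS a / 2 := by
  induction a with
  | zero => have := Tm04; simp [Dd, sS, Nat.factorial]; linarith
  | succ a ih =>
      have h := Tm_rec_m' (2*a) 4 (2*(a+1)) (2*a+5) (by omega) (by omega)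
      have hb : Bq (2*a+5) = ((a+2).factorial : ℝ) / 2 := Bq_val' (a+2) _ (by omega)
      rw [h, hb, ih, sSS, DdS, hf2R, hf1R]
      have hDa := (Dd_pos a).ne'
      have h21 : (2*(a:ℝ)+1) ≠ 0 := by positivity
      push_cast
      field_simp
      ring

lemma U3 (a : ℕ) : Tm (2*a) 6 = 15 * Dd a * Real.pi / 4
    + ((a:ℝ)^2 + 8*a + 22) * (a.factorial : ℝ) / 2 - 15 * Dd a * sS a / 2 := by
  induction a with
  | zero => have := Tm06; simp [Dd, sS, Nat.factorial]; linarith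
  | succ a ih =>
      have h := Tm_rec_m' (2*a) 6 (2*(a+1)) (2*a+7) (by omega) (by omega)
      have hb : Bq (2*a+7) = ((a+3).factorial : ℝ) / 2 := Bq_val' (a+3) _ (by omega)
      rw [h, hb, ih, sSS, DdS, hf3R, hf1R]
      have hDa := (Dd_pos a).ne'
      have h21 : (2*(a:ℝ)+1) ≠ 0 := by positivity
      push_cast
      field_simp
      ring

lemma W0 (a : ℕ) : Tm (2*a) 0 + Tm 0 (2*a) = Dd a * Real.pi / 2 := by
  induction a with
  | zero => simp [Dd, Tm_zero_zero]; ring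
  | succ a ih =>
      have h1 := Tm_rec_m' (2*a) 0 (2*(a+1)) (2*a+1) (by omega) (by omega)
      have h2 := Tm_rec_n' 0 (2*a) (2*(a+1)) (2*a+1) (by omega) (by omega)
      rw [h1, h2, DdS]
      push_cast
      linear_combination (2*(a:ℝ)+1) * ih

lemma Wab (a b : ℕ) : Tm (2*a) (2*b) + Tm (2*b) (2*a) = Dd a * Dd b * Real.pi / 2 := by
  induction b with
  | zero =>
      have := W0 a
      simp only [Nat.mul_zero] at *
      rw [show Dd 0 = 1 from rfl]
      linarith [this]
  | succ b ih =>
      have h1 := Tm_rec_n' (2*a) (2*b) (2*(b+1)) (2*a+2*b+1) (by omega) (by omega)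
      have h2 := Tm_rec_m' (2*b) (2*a) (2*(b+1)) (2*a+2*b+1) (by omega) (by omega)
      rw [h1, h2, DdS]
      push_cast
      linear_combination (2*(b:ℝ)+1) * ih

-- primed versions

lemma U1' (a m : ℕ) (h : m = 2*a) : Tm m 2 = Dd a * Real.pi / 4
    + (a.factorial : ℝ) / 2 - Dd a * sS a / 2 := by subst h; exact U1 a

lemma U2' (a m : ℕ) (h : m = 2*a) : Tm m 4 = 3 * Dd a * Real.pi / 4
    + ((a:ℝ) + 4) * (a.factorial : ℝ) / 2 - 3 * Dd a * sS a / 2 := by subst h; exact U2 a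

lemma U3' (a m : ℕ) (h : m = 2*a) : Tm m 6 = 15 * Dd a * Real.pi / 4
    + ((a:ℝ)^2 + 8*a + 22) * (a.factorial : ℝ) / 2 - 15 * Dd a * sS a / 2 := by
  subst h; exact U3 a

lemma Wab' (a b m n : ℕ) (hm : m = 2*a) (hn : n = 2*b) :
    Tm m n + Tm n m = Dd a * Dd b * Real.pi / 2 := by subst hm hn; exact Wab a b

lemma DdS' (a b : ℕ) (h : b = a+1) : Dd b = (2*(a:ℝ)+1) * Dd a := by subst h; exact DdS a

lemma sSS' (a b : ℕ) (h : b = a+1) : sS b = sS a + (a.factorial : ℝ) / Dd b := by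
  subst h; exact sSS a

lemma hf1R' (a b : ℕ) (h : b = a+1) :
    ((b).factorial : ℝ) = ((a:ℝ)+1) * (a.factorial : ℝ) := by subst h; exact hf1R a

lemma fact2R (a : ℕ) : ((2*a).factorial : ℝ) = (a.factorial : ℝ) * 2^a * Dd a := by
  induction a with
  | zero => norm_num [Dd, Nat.factorial]
  | succ a ih =>
      have h : (2*(a+1)) = (2*a+1)+1 := by omega
      rw [h, Nat.factorial_succ, Nat.factorial_succ]
      push_cast
      rw [ih, hf1R a, DdS a]
      push_cast
      ring

lemma fact2R' (a b : ℕ) (h : b = 2*a) :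
    ((b).factorial : ℝ) = (a.factorial : ℝ) * 2^a * Dd a := by subst h; exact fact2R a

lemma sum_eq (K : ℕ) :
    (∑ j ∈ Finset.Icc 1 K, (2:ℝ) ^ j / ((j : ℝ) * (Nat.choose (2*j) j : ℝ))) = sS K := by
  induction K with
  | zero => simp [sS]
  | succ K ih =>
      rw [Finset.sum_Icc_succ_top (by omega : 1 ≤ K+1), ih, sSS]
      congr 1
      have hc : ((2*(K+1)).choose (K+1) : ℝ) * (K+1).factorial * (K+1).factorial
          = ((2*(K+1)).factorial : ℝ) := by
        have := Nat.choose_mul_factorial_mul_factorial (show K+1 ≤ 2*(K+1) by omega)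
        rw [show 2*(K+1) - (K+1) = K+1 by omega] at this
        exact_mod_cast congrArg (fun x : ℕ => (x : ℝ)) this
      have hfa := fact2R (K+1)
      have hf : ((K+1).factorial : ℝ) ≠ 0 := by positivity
      have h2 : (((2*(K+1)).choose (K+1) : ℝ) * (K+1).factorial) * (K+1).factorial
          = (2^(K+1) * Dd (K+1)) * (K+1).factorial := by
        linear_combination hc + hfa
      have h1 := mul_right_cancel₀ hf h2
      have hch : ((2*(K+1)).choose (K+1) : ℝ)
          = 2^(K+1) * Dd (K+1) / ((K+1).factorial : ℝ) := by
        rw [eq_div_iff hf]; exact h1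
      rw [hch, hf1R K]
      have hD := (Dd_pos (K+1)).ne'
      have hf : ((K).factorial : ℝ) ≠ 0 := by positivity
      have hk1 : ((K:ℝ)+1) ≠ 0 := by positivity
      field_simp
      push_cast
      ring

set_option maxHeartbeats 1000000 in

/-- even-moment integrals of the two branches of the continuous
2-watermelon with wall condition. `C(2j,j)` is the central binomial coefficient. -/
theorem melonW2_even_moment_integrals (k : ℕ) (hk : 1 ≤ k) :
    ((∫ q in {q : ℝ × ℝ | 0 ≤ q.1 ∧ q.1 ≤ q.2},
        q.1 ^ (2 * k) * (q.2 ^ 2 - q.1 ^ 2) ^ 2 * q.1 ^ 2 * q.2 ^ 2 *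
          Real.exp (-(q.1 ^ 2 + q.2 ^ 2) / 2))
      = 2 * (3 - (k : ℝ)) * (Nat.factorial (k + 1) : ℝ)
        + ((k : ℝ) ^ 2 + (k : ℝ) + 3) * (Nat.factorial (2 * k + 2) : ℝ)
            / ((Nat.factorial (k + 1) : ℝ) * 2 ^ (k + 1))
          * (Real.pi - 2 * ∑ j ∈ Finset.Icc 1 (k + 1),
              (2 : ℝ) ^ j / ((j : ℝ) * (Nat.choose (2 * j) j : ℝ))))
    ∧ ((∫ q in {q : ℝ × ℝ | 0 ≤ q.1 ∧ q.1 ≤ q.2},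
        q.2 ^ (2 * k) * (q.2 ^ 2 - q.1 ^ 2) ^ 2 * q.1 ^ 2 * q.2 ^ 2 *
          Real.exp (-(q.1 ^ 2 + q.2 ^ 2) / 2))
      = -(2 * (3 - (k : ℝ)) * (Nat.factorial (k + 1) : ℝ))
        + ((k : ℝ) ^ 2 + (k : ℝ) + 3) * (Nat.factorial (2 * k + 2) : ℝ)
            / ((Nat.factorial (k + 1) : ℝ) * 2 ^ (k + 1))
          * (Real.pi + 2 * ∑ j ∈ Finset.Icc 1 (k + 1),
              (2 : ℝ) ^ j / ((j : ℝ) * (Nat.choose (2 * j) j : ℝ)))) := by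
  have hi : ∀ m n : ℕ, IntegrableOn
      (fun q : ℝ × ℝ => q.1 ^ m * q.2 ^ n * Real.exp (-(q.1 ^ 2 + q.2 ^ 2) / 2))
      {q : ℝ × ℝ | 0 ≤ q.1 ∧ q.1 ≤ q.2} := fun m n =>
    ((integrable_prod_mono m n).congr
      (Eventually.of_forall fun q => (integrand_eq m n q).symm)).integrableOn
  -- common RHS rewriting facts
  have hfact : (Nat.factorial (2*k+2) : ℝ)
      = ((k+1).factorial : ℝ) * 2^(k+1) * Dd (k+1) := fact2R' (k+1) _ (by omega)
  have hsum := sum_eq (k+1)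
  have hu3 := U3' (k+1) (2*k+2) (by omega)
  have hu2 := U2' (k+2) (2*k+4) (by omega)
  have hu1 := U1' (k+3) (2*k+6) (by omega)
  have hD2 := DdS' (k+1) (k+2) rfl
  have hD3 := DdS' (k+2) (k+3) rfl
  have hs2 := sSS' (k+1) (k+2) rfl
  have hs3 := sSS' (k+2) (k+3) rfl
  have hfk2 := hf1R' (k+1) (k+2) rfl
  have hfk3 := hf1R' (k+2) (k+3) rfl
  have hDpos := Dd_pos (k+1)
  have hD := hDpos.ne'
  have hfne : ((k+1).factorial : ℝ) ≠ 0 := by positivity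
  have h23 : (2*(k:ℝ)+3) ≠ 0 := by positivity
  have h25 : (2*(k:ℝ)+5) ≠ 0 := by positivity
  have h2p : ((2:ℝ)^(k+1)) ≠ 0 := by positivity
  constructor
  · have hpt : ∀ q ∈ {q : ℝ × ℝ | 0 ≤ q.1 ∧ q.1 ≤ q.2},
        q.1 ^ (2*k) * (q.2 ^ 2 - q.1 ^ 2) ^ 2 * q.1 ^ 2 * q.2 ^ 2 *
          Real.exp (-(q.1 ^ 2 + q.2 ^ 2) / 2)
        = (q.1 ^ (2*k+2) * q.2 ^ 6 * Real.exp (-(q.1 ^ 2 + q.2 ^ 2) / 2)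
          - 2 * (q.1 ^ (2*k+4) * q.2 ^ 4 * Real.exp (-(q.1 ^ 2 + q.2 ^ 2) / 2)))
          + q.1 ^ (2*k+6) * q.2 ^ 2 * Real.exp (-(q.1 ^ 2 + q.2 ^ 2) / 2) := by
      intro q _; ring
    have hA : IntegrableOn (fun q : ℝ × ℝ =>
        q.1 ^ (2*k+2) * q.2 ^ 6 * Real.exp (-(q.1 ^ 2 + q.2 ^ 2) / 2)
        - 2 * (q.1 ^ (2*k+4) * q.2 ^ 4 * Real.exp (-(q.1 ^ 2 + q.2 ^ 2) / 2)))
        {q : ℝ × ℝ | 0 ≤ q.1 ∧ q.1 ≤ q.2} := (hi (2*k+2) 6).sub ((hi (2*k+4) 4).const_mul 2)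
    rw [setIntegral_congr_fun hS_meas hpt,
      integral_add hA (hi (2*k+6) 2),
      integral_sub (hi (2*k+2) 6) ((hi (2*k+4) 4).const_mul 2), integral_const_mul,
      fub, fub, fub, hu3, hu2, hu1, hfact, hsum, hs3, hs2, hD3, hD2, hfk3, hfk2]
    push_cast
    field_simp
    ring
  · have hpt : ∀ q ∈ {q : ℝ × ℝ | 0 ≤ q.1 ∧ q.1 ≤ q.2},
        q.2 ^ (2*k) * (q.2 ^ 2 - q.1 ^ 2) ^ 2 * q.1 ^ 2 * q.2 ^ 2 *
          Real.exp (-(q.1 ^ 2 + q.2 ^ 2) / 2)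
        = (q.1 ^ 2 * q.2 ^ (2*k+6) * Real.exp (-(q.1 ^ 2 + q.2 ^ 2) / 2)
          - 2 * (q.1 ^ 4 * q.2 ^ (2*k+4) * Real.exp (-(q.1 ^ 2 + q.2 ^ 2) / 2)))
          + q.1 ^ 6 * q.2 ^ (2*k+2) * Real.exp (-(q.1 ^ 2 + q.2 ^ 2) / 2) := by
      intro q _; ring
    have hA : IntegrableOn (fun q : ℝ × ℝ =>
        q.1 ^ 2 * q.2 ^ (2*k+6) * Real.exp (-(q.1 ^ 2 + q.2 ^ 2) / 2)
        - 2 * (q.1 ^ 4 * q.2 ^ (2*k+4) * Real.exp (-(q.1 ^ 2 + q.2 ^ 2) / 2)))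
        {q : ℝ × ℝ | 0 ≤ q.1 ∧ q.1 ≤ q.2} := (hi 2 (2*k+6)).sub ((hi 4 (2*k+4)).const_mul 2)
    rw [setIntegral_congr_fun hS_meas hpt,
      integral_add hA (hi 6 (2*k+2)),
      integral_sub (hi 2 (2*k+6)) ((hi 4 (2*k+4)).const_mul 2), integral_const_mul,
      fub, fub, fub]
    have hw1 := Wab' 1 (k+3) 2 (2*k+6) (by omega) (by omega)
    have hw2 := Wab' 2 (k+2) 4 (2*k+4) (by omega) (by omega)
    have hw3 := Wab' 3 (k+1) 6 (2*k+2) (by omega) (by omega)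
    have hd1 : Dd 1 = 1 := by norm_num [Dd]
    have hd2 : Dd 2 = 3 := by norm_num [Dd]
    have hd3 : Dd 3 = 15 := by norm_num [Dd]
    rw [hd1] at hw1; rw [hd2] at hw2; rw [hd3] at hw3
    have e1 : Tm 2 (2*k+6) = 1 * Dd (k+3) * Real.pi / 2 - Tm (2*k+6) 2 := by linarith
    have e2 : Tm 4 (2*k+4) = 3 * Dd (k+2) * Real.pi / 2 - Tm (2*k+4) 4 := by linarith
    have e3 : Tm 6 (2*k+2) = 15 * Dd (k+1) * Real.pi / 2 - Tm (2*k+2) 6 := by linarith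
    rw [e1, e2, e3, hu3, hu2, hu1, hfact, hsum, hs3, hs2, hD3, hD2, hfk3, hfk2]
    push_cast
    field_simp
    ring
end

section
/- For every integer k ≥ 0 and for each i ∈ {1, 2}: (1/(2π)) · ∫∫_{−∞ < u_1 ≤ u_2 < ∞} u_i^{2k} · (u_2 − u_1)² · exp(−(u_1² + u_2²)/2) du_1 du_2 = (2k)! (k+1) / (2^k · k!). -/
open MeasureTheory Real Filter Asymptotics

set_option maxRecDepth 4000

lemma cont_gauss (n : ℕ) : Continuous (fun x : ℝ => x ^ n * Real.exp (-x ^ 2 / 2)) := by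
  fun_prop

lemma gauss_pow_tendsto_atTop (n : ℕ) :
    Tendsto (fun x : ℝ => x ^ n * Real.exp (-x ^ 2 / 2)) atTop (nhds 0) := by
  have h := rpow_mul_exp_neg_mul_sq_isLittleO_exp_neg (b := 1/2) (by norm_num) (n : ℝ)
  have hlin : Tendsto (fun x : ℝ => (1/2 : ℝ) * x) atTop atTop :=
    Tendsto.const_mul_atTop (by norm_num) tendsto_id
  have h2 : Tendsto (fun x : ℝ => Real.exp (-(1/2) * x)) atTop (nhds 0) := by
    have := Real.tendsto_exp_neg_atTop_nhds_zero.comp hlin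
    refine this.congr fun x => ?_
    simp [Function.comp, neg_mul]
  have h3 := h.isBigO.trans_tendsto h2
  refine h3.congr' ?_
  filter_upwards [eventually_gt_atTop (0:ℝ)] with x hx
  rw [Real.rpow_natCast]
  ring_nf

lemma gauss_pow_tendsto_atBot (n : ℕ) :
    Tendsto (fun x : ℝ => x ^ n * Real.exp (-x ^ 2 / 2)) atBot (nhds 0) := by
  have h := (gauss_pow_tendsto_atTop n).comp tendsto_neg_atBot_atTop
  have h2 : (fun x : ℝ => ((-1:ℝ)) ^ n * (x ^ n * Real.exp (-x ^ 2 / 2)))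
      = (fun x : ℝ => x ^ n * Real.exp (-x ^ 2 / 2)) ∘ (fun x : ℝ => -x) := by
    funext x
    simp only [Function.comp_apply, neg_sq]
    rw [neg_pow]
    ring
  have h3 : Tendsto (fun x : ℝ => ((-1:ℝ)) ^ n * (x ^ n * Real.exp (-x ^ 2 / 2))) atBot (nhds 0) := by
    rw [h2]; exact h
  have h4 := h3.const_mul (((-1:ℝ)) ^ n)
  have : ((-1:ℝ)) ^ n * ((-1:ℝ)) ^ n = 1 := by
    rw [← mul_pow]; norm_num
  simpa [← mul_assoc, this] using h4

lemma gauss_pow_integrable (n : ℕ) :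
    Integrable (fun x : ℝ => x ^ n * Real.exp (-x ^ 2 / 2)) := by
  have hloc : LocallyIntegrable (fun x : ℝ => x ^ n * Real.exp (-x ^ 2 / 2)) volume :=
    (cont_gauss n).locallyIntegrable
  refine hloc.integrable_of_isBigO_atTop_of_norm_isNegInvariant ?_ ?_
    (g := fun x : ℝ => Real.exp (-(1/2) * x)) ?_
  · refine Filter.Eventually.of_forall fun x => ?_
    simp [Function.comp, abs_mul, abs_pow, neg_div]
  · have h := rpow_mul_exp_neg_mul_sq_isLittleO_exp_neg (b := 1/2) (by norm_num) (n : ℝ)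
    refine (h.isBigO.congr' ?_ (EventuallyEq.refl _ _))
    filter_upwards [eventually_gt_atTop (0:ℝ)] with x hx
    rw [Real.rpow_natCast]
    ring_nf
  · exact ⟨Set.Ioi 0, Ioi_mem_atTop 0, by
      simpa [neg_mul] using exp_neg_integrableOn_Ioi 0 (by norm_num : (0:ℝ) < 1/2)⟩

lemma gauss_int_zero : ∫ x : ℝ, Real.exp (-x ^ 2 / 2) = Real.sqrt (2 * Real.pi) := by
  have h := integral_gaussian (1/2)
  rw [show Real.pi / (1/2) = 2 * Real.pi by ring] at h
  rw [← h]
  congr 1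
  funext x
  ring_nf

lemma gauss_deriv (n : ℕ) (x : ℝ) :
    HasDerivAt (fun x : ℝ => -(x ^ (n+1) * Real.exp (-x ^ 2 / 2)))
      (x ^ (n+2) * Real.exp (-x ^ 2 / 2) - (n+1) * (x ^ n * Real.exp (-x ^ 2 / 2))) x := by
  have he : HasDerivAt (fun x : ℝ => Real.exp (-x ^ 2 / 2)) (-x * Real.exp (-x ^ 2 / 2)) x := by
    have h1 : HasDerivAt (fun x : ℝ => -x ^ 2 / 2) (-x) x := by
      have := ((hasDerivAt_pow 2 x).neg).div_const 2
      refine this.congr_deriv ?_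
      simp
      ring
    simpa [mul_comm] using h1.exp
  have hp : HasDerivAt (fun x : ℝ => x ^ (n+1)) ((n+1) * x ^ n) x := by
    simpa using hasDerivAt_pow (n+1) x
  have := ((hp.mul he).neg)
  refine this.congr_deriv ?_
  ring

lemma gauss_rec (n : ℕ) :
    ∫ x : ℝ, x ^ (n+2) * Real.exp (-x ^ 2 / 2)
      = (n+1) * ∫ x : ℝ, x ^ n * Real.exp (-x ^ 2 / 2) := by
  have hint : Integrable (fun x : ℝ =>
      x ^ (n+2) * Real.exp (-x ^ 2 / 2) - (n+1) * (x ^ n * Real.exp (-x ^ 2 / 2))) :=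
    (gauss_pow_integrable (n+2)).sub ((gauss_pow_integrable n).const_mul _)
  have htop : Tendsto (fun x : ℝ => -(x ^ (n+1) * Real.exp (-x ^ 2 / 2))) atTop (nhds 0) := by
    simpa using (gauss_pow_tendsto_atTop (n+1)).neg
  have hbot : Tendsto (fun x : ℝ => -(x ^ (n+1) * Real.exp (-x ^ 2 / 2))) atBot (nhds 0) := by
    simpa using (gauss_pow_tendsto_atBot (n+1)).neg
  have h := integral_of_hasDerivAt_of_tendsto (fun x => gauss_deriv n x) hint hbot htop
  rw [sub_zero] at h
  rw [integral_sub (gauss_pow_integrable (n+2)) ((gauss_pow_integrable n).const_mul _),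
    MeasureTheory.integral_const_mul] at h
  linarith [h]

lemma gauss_int_one : ∫ x : ℝ, x * Real.exp (-x ^ 2 / 2) = 0 := by
  have he : ∀ x : ℝ, HasDerivAt (fun x : ℝ => -Real.exp (-x ^ 2 / 2))
      (x * Real.exp (-x ^ 2 / 2)) x := by
    intro x
    have h1 : HasDerivAt (fun x : ℝ => -x ^ 2 / 2) (-x) x := by
      have := ((hasDerivAt_pow 2 x).neg).div_const 2
      refine this.congr_deriv ?_
      simp
      ring
    have := (h1.exp).neg
    refine this.congr_deriv ?_
    ring
  have hint : Integrable (fun x : ℝ => x * Real.exp (-x ^ 2 / 2)) := by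
    simpa using gauss_pow_integrable 1
  have htop : Tendsto (fun x : ℝ => -Real.exp (-x ^ 2 / 2)) atTop (nhds 0) := by
    simpa using (gauss_pow_tendsto_atTop 0).neg
  have hbot : Tendsto (fun x : ℝ => -Real.exp (-x ^ 2 / 2)) atBot (nhds 0) := by
    simpa using (gauss_pow_tendsto_atBot 0).neg
  have h := integral_of_hasDerivAt_of_tendsto he hint hbot htop
  simpa using h

lemma gauss_even_moment (n : ℕ) :
    ∫ x : ℝ, x ^ (2*n) * Real.exp (-x ^ 2 / 2)
      = Real.sqrt (2 * Real.pi) * (Nat.factorial (2*n)) / (2 ^ n * Nat.factorial n) := by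
  induction n with
  | zero => simpa using gauss_int_zero
  | succ m ih =>
      have h2 : 2 * (m+1) = (2*m) + 2 := by ring
      rw [h2, gauss_rec (2*m), ih]
      have h3 : (Nat.factorial (2*m+2) : ℝ)
          = (2*(m:ℝ)+2) * (2*(m:ℝ)+1) * Nat.factorial (2*m) := by
        rw [show 2*m+2 = (2*m+1)+1 by ring, Nat.factorial_succ,
          show (2*m+1) = (2*m)+1 from rfl, Nat.factorial_succ]
        push_cast; ring
      have h4 : (Nat.factorial (m+1) : ℝ) = (m+1) * Nat.factorial m := by
        rw [Nat.factorial_succ]; push_cast; ring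
      rw [h3, h4]
      have hm : (Nat.factorial m : ℝ) ≠ 0 := Nat.cast_ne_zero.mpr (Nat.factorial_ne_zero m)
      have hm1 : ((m:ℝ)+1) ≠ 0 := by positivity
      have h2p : (2:ℝ) ^ m ≠ 0 := by positivity
      push_cast
      field_simp
      ring

lemma plane_decomp (k : ℕ) (q : ℝ × ℝ) :
    q.1 ^ (2*k) * (q.2 - q.1)^2 * Real.exp (-(q.1^2+q.2^2)/2)
    = (q.1^(2*k+2) * Real.exp (-q.1^2/2)) * (q.2^0 * Real.exp (-q.2^2/2))
      - 2 * ((q.1^(2*k+1) * Real.exp (-q.1^2/2)) * (q.2^1 * Real.exp (-q.2^2/2)))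
      + (q.1^(2*k) * Real.exp (-q.1^2/2)) * (q.2^2 * Real.exp (-q.2^2/2)) := by
  rw [show (-(q.1^2+q.2^2)/2 : ℝ) = -q.1^2/2 + -q.2^2/2 by ring, Real.exp_add]
  ring

lemma plane_integrable (k : ℕ) :
    Integrable (fun q : ℝ×ℝ =>
      q.1 ^ (2*k) * (q.2-q.1)^2 * Real.exp (-(q.1^2+q.2^2)/2)) := by
  rw [Measure.volume_eq_prod]
  have h : ∀ n m : ℕ, Integrable (fun q : ℝ×ℝ =>
      (q.1^n * Real.exp (-q.1^2/2)) * (q.2^m * Real.exp (-q.2^2/2)))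
      ((volume : Measure ℝ).prod volume) :=
    fun n m => (gauss_pow_integrable n).mul_prod (gauss_pow_integrable m)
  have := ((h (2*k+2) 0).sub ((h (2*k+1) 1).const_mul 2)).add (h (2*k) 2)
  refine this.congr (Filter.Eventually.of_forall fun q => ?_)
  exact (plane_decomp k q).symm

lemma plane_integral (k : ℕ) :
    ∫ q : ℝ×ℝ, q.1 ^ (2*k) * (q.2-q.1)^2 * Real.exp (-(q.1^2+q.2^2)/2)
      = 2 * (2 * Real.pi * ((Nat.factorial (2*k) : ℝ) * ((k:ℝ)+1)
          / (2 ^ k * (Nat.factorial k : ℝ)))) := by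
  have hfe : (fun q : ℝ×ℝ => q.1 ^ (2*k) * (q.2-q.1)^2 * Real.exp (-(q.1^2+q.2^2)/2))
      = fun q : ℝ×ℝ =>
      (q.1^(2*k+2) * Real.exp (-q.1^2/2)) * (q.2^0 * Real.exp (-q.2^2/2))
      - 2 * ((q.1^(2*k+1) * Real.exp (-q.1^2/2)) * (q.2^1 * Real.exp (-q.2^2/2)))
      + (q.1^(2*k) * Real.exp (-q.1^2/2)) * (q.2^2 * Real.exp (-q.2^2/2)) :=
    funext (plane_decomp k)
  rw [hfe, Measure.volume_eq_prod]
  have h : ∀ n m : ℕ, Integrable (fun q : ℝ×ℝ =>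
      (q.1^n * Real.exp (-q.1^2/2)) * (q.2^m * Real.exp (-q.2^2/2)))
      ((volume : Measure ℝ).prod volume) :=
    fun n m => (gauss_pow_integrable n).mul_prod (gauss_pow_integrable m)
  have hA : Integrable (fun q : ℝ×ℝ =>
      (q.1^(2*k+2) * Real.exp (-q.1^2/2)) * (q.2^0 * Real.exp (-q.2^2/2))
      - 2 * ((q.1^(2*k+1) * Real.exp (-q.1^2/2)) * (q.2^1 * Real.exp (-q.2^2/2))))
      ((volume : Measure ℝ).prod volume) := (h (2*k+2) 0).sub ((h (2*k+1) 1).const_mul 2)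
  have hB : Integrable (fun q : ℝ×ℝ =>
      2 * ((q.1^(2*k+1) * Real.exp (-q.1^2/2)) * (q.2^1 * Real.exp (-q.2^2/2))))
      ((volume : Measure ℝ).prod volume) := (h (2*k+1) 1).const_mul 2
  rw [integral_add hA (h (2*k) 2),
    integral_sub (h (2*k+2) 0) hB,
    MeasureTheory.integral_const_mul,
    integral_prod_mul (fun x : ℝ => x^(2*k+2) * Real.exp (-x^2/2))
      (fun y : ℝ => y^0 * Real.exp (-y^2/2)),
    integral_prod_mul (fun x : ℝ => x^(2*k+1) * Real.exp (-x^2/2))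
      (fun y : ℝ => y^1 * Real.exp (-y^2/2)),
    integral_prod_mul (fun x : ℝ => x^(2*k) * Real.exp (-x^2/2))
      (fun y : ℝ => y^2 * Real.exp (-y^2/2))]
  have e0 : ∫ x : ℝ, x^0 * Real.exp (-x^2/2) = Real.sqrt (2*Real.pi) := by
    simpa using gauss_int_zero
  have e1 : ∫ x : ℝ, x^1 * Real.exp (-x^2/2) = 0 := by
    simpa using gauss_int_one
  have e2 : ∫ x : ℝ, x^2 * Real.exp (-x^2/2) = Real.sqrt (2*Real.pi) := by
    have := gauss_even_moment 1
    norm_num [Nat.factorial] at this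
    simpa using this
  have etop : ∫ x : ℝ, x^(2*k+2) * Real.exp (-x^2/2)
      = Real.sqrt (2 * Real.pi) * (Nat.factorial (2*k+2)) / (2 ^ (k+1) * Nat.factorial (k+1)) := by
    have := gauss_even_moment (k+1)
    rw [show 2*(k+1) = 2*k+2 by ring] at this
    exact this
  have emid : ∫ x : ℝ, x^(2*k) * Real.exp (-x^2/2)
      = Real.sqrt (2 * Real.pi) * (Nat.factorial (2*k)) / (2 ^ k * Nat.factorial k) :=
    gauss_even_moment k
  rw [e0, e1, e2, etop, emid]
  have hsq : Real.sqrt (2*Real.pi) * Real.sqrt (2*Real.pi) = 2*Real.pi :=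
    Real.mul_self_sqrt (by positivity)
  have h3 : (Nat.factorial (2*k+2) : ℝ)
      = (2*(k:ℝ)+2) * (2*(k:ℝ)+1) * Nat.factorial (2*k) := by
    rw [show 2*k+2 = (2*k+1)+1 by ring, Nat.factorial_succ,
      show (2*k+1) = (2*k)+1 from rfl, Nat.factorial_succ]
    push_cast; ring
  have h4 : (Nat.factorial (k+1) : ℝ) = ((k:ℝ)+1) * Nat.factorial k := by
    rw [Nat.factorial_succ]; push_cast; ring
  rw [h3, h4]
  have hm : (Nat.factorial k : ℝ) ≠ 0 := Nat.cast_ne_zero.mpr (Nat.factorial_ne_zero k)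
  have hm1 : ((k:ℝ)+1) ≠ 0 := by positivity
  have h2p : (2:ℝ) ^ k ≠ 0 := by positivity
  rw [pow_succ, ← hsq]
  have hs0 : Real.sqrt (2*Real.pi) ≠ 0 := by positivity
  field_simp
  rw [Real.sqrt_sq (by positivity)]
  ring

/-- even-moment integrals of the two branches of the continuous
2-watermelon without wall condition. -/
theorem melonNW2_even_moment_integrals (k : ℕ) :
    (1 / (2 * Real.pi) *
        (∫ q in {q : ℝ × ℝ | q.1 ≤ q.2},
          q.1 ^ (2 * k) * (q.2 - q.1) ^ 2 * Real.exp (-(q.1 ^ 2 + q.2 ^ 2) / 2))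
      = (Nat.factorial (2 * k) : ℝ) * ((k : ℝ) + 1) / (2 ^ k * (Nat.factorial k : ℝ)))
    ∧ (1 / (2 * Real.pi) *
        (∫ q in {q : ℝ × ℝ | q.1 ≤ q.2},
          q.2 ^ (2 * k) * (q.2 - q.1) ^ 2 * Real.exp (-(q.1 ^ 2 + q.2 ^ 2) / 2))
      = (Nat.factorial (2 * k) : ℝ) * ((k : ℝ) + 1) / (2 ^ k * (Nat.factorial k : ℝ))) := by
  set f1 : ℝ × ℝ → ℝ := fun q =>
    q.1 ^ (2 * k) * (q.2 - q.1) ^ 2 * Real.exp (-(q.1 ^ 2 + q.2 ^ 2) / 2) with hf1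
  set f2 : ℝ × ℝ → ℝ := fun q =>
    q.2 ^ (2 * k) * (q.2 - q.1) ^ 2 * Real.exp (-(q.1 ^ 2 + q.2 ^ 2) / 2) with hf2
  set S : Set (ℝ × ℝ) := {q : ℝ × ℝ | q.1 ≤ q.2} with hSdef
  have hS : MeasurableSet S := measurableSet_le measurable_fst measurable_snd
  -- the map T
  set T : ℝ × ℝ → ℝ × ℝ := fun q => (-q.2, -q.1) with hTdef
  have hswap : MeasurePreserving (Prod.swap : ℝ×ℝ → ℝ×ℝ) volume volume := by
    rw [Measure.volume_eq_prod]
    exact Measure.measurePreserving_swap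
  have hneg : MeasurePreserving (fun p : ℝ×ℝ => -p) volume volume :=
    Measure.measurePreserving_neg _
  have hT : MeasurePreserving T volume volume := by
    have h := hneg.comp hswap
    have : ((fun p : ℝ×ℝ => -p) ∘ Prod.swap) = T := by
      funext q; rfl
    rwa [this] at h
  have hTemb : MeasurableEmbedding T := by
    have h := ((Homeomorph.neg (ℝ×ℝ)).measurableEmbedding).comp
      (MeasurableEquiv.prodComm.measurableEmbedding)
    have : ((Homeomorph.neg (ℝ×ℝ)) ∘ (MeasurableEquiv.prodComm (α := ℝ) (β := ℝ))) = T := by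
      funext q; rfl
    rwa [this] at h
  have hTpre : T ⁻¹' S = S := by
    ext q
    simp only [hSdef, hTdef, Set.mem_preimage, Set.mem_setOf_eq, neg_le_neg_iff]
  -- claim A : ∫_S f1 = ∫_S f2
  have claimA : ∫ q in S, f1 q = ∫ q in S, f2 q := by
    have h := hT.setIntegral_preimage_emb hTemb f2 S
    rw [hTpre] at h
    rw [← h]
    refine setIntegral_congr_fun hS fun q _ => ?_
    show f1 q = f2 (T q)
    simp only [hf1, hf2, hTdef]
    rw [Even.neg_pow (even_two_mul k),
      show ((-q.1) - (-q.2) : ℝ)^2 = (q.2 - q.1)^2 by ring,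
      show (-((-q.2)^2 + (-q.1)^2)/2 : ℝ) = -(q.1^2 + q.2^2)/2 by ring]
  -- claim C : ∫ over the reflected half-plane
  set S' : Set (ℝ × ℝ) := {q : ℝ × ℝ | q.2 ≤ q.1} with hS'def
  have hwemb : MeasurableEmbedding (Prod.swap : ℝ×ℝ → ℝ×ℝ) :=
    MeasurableEquiv.prodComm.measurableEmbedding
  have hwpre : (Prod.swap : ℝ×ℝ → ℝ×ℝ) ⁻¹' S = S' := by
    ext q
    simp only [hSdef, hS'def, Set.mem_preimage, Set.mem_setOf_eq, Prod.fst_swap, Prod.snd_swap]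
  have hS'm : MeasurableSet S' := measurableSet_le measurable_snd measurable_fst
  have claimC : ∫ q in S', f1 q = ∫ q in S, f2 q := by
    have h := hswap.setIntegral_preimage_emb hwemb f2 S
    rw [hwpre] at h
    rw [← h]
    refine setIntegral_congr_fun hS'm fun q _ => ?_
    show f1 q = f2 (Prod.swap q)
    simp only [hf1, hf2, Prod.fst_swap, Prod.snd_swap]
    rw [show ((q.1 - q.2) : ℝ)^2 = (q.2 - q.1)^2 by ring,
      show (-(q.2^2 + q.1^2)/2 : ℝ) = -(q.1^2 + q.2^2)/2 by ring]
  -- diagonal has measure zero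
  have hdiag : volume {q : ℝ×ℝ | q.1 = q.2} = 0 := by
    have hset : {q : ℝ×ℝ | q.1 = q.2}
        = (LinearMap.ker (LinearMap.fst ℝ ℝ ℝ - LinearMap.snd ℝ ℝ ℝ) : Set (ℝ×ℝ)) := by
      ext q
      simp only [Set.mem_setOf_eq, SetLike.mem_coe, LinearMap.mem_ker, LinearMap.sub_apply,
        LinearMap.fst_apply, LinearMap.snd_apply, sub_eq_zero]
    rw [hset]
    apply Measure.addHaar_submodule
    rw [Ne, LinearMap.ker_eq_top]
    intro h
    have : (LinearMap.fst ℝ ℝ ℝ - LinearMap.snd ℝ ℝ ℝ) (1, 0)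
        = (0 : ℝ × ℝ →ₗ[ℝ] ℝ) (1, 0) := by rw [h]
    simp at this
  -- Sᶜ =ᵐ S'
  have hScompl : Sᶜ = {q : ℝ×ℝ | q.2 < q.1} := by
    ext q
    simp only [hSdef, Set.mem_compl_iff, Set.mem_setOf_eq, not_le]
  have hae : Sᶜ =ᵐ[volume] S' := by
    show (Sᶜ : Set (ℝ×ℝ)) =ᵐ[volume] S'
    rw [hScompl, MeasureTheory.ae_eq_set]
    constructor
    · refine measure_mono_null ?_ hdiag
      rintro q ⟨hq1, hq2⟩
      have h1 : q.2 < q.1 := hq1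
      have h2 : ¬ q.2 ≤ q.1 := hq2
      exact absurd (le_of_lt h1) h2
    · refine measure_mono_null ?_ hdiag
      rintro q ⟨hq1, hq2⟩
      have h1 : q.2 ≤ q.1 := hq1
      have h2 : ¬ q.2 < q.1 := hq2
      show q.1 = q.2
      exact le_antisymm (le_of_not_gt h2) h1
  have hcompl : ∫ q in Sᶜ, f1 q = ∫ q in S', f1 q := setIntegral_congr_set hae
  have hsplit : (∫ q in S, f1 q) + (∫ q in Sᶜ, f1 q) = ∫ q, f1 q :=
    integral_add_compl hS (plane_integrable k)
  have htotal : ∫ q, f1 q = 2 * (2 * Real.pi * ((Nat.factorial (2*k) : ℝ) * ((k:ℝ)+1)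
      / (2 ^ k * (Nat.factorial k : ℝ)))) := plane_integral k
  have hval : ∫ q in S, f1 q = 2 * Real.pi * ((Nat.factorial (2*k) : ℝ) * ((k:ℝ)+1)
      / (2 ^ k * (Nat.factorial k : ℝ))) := by
    have : (∫ q in S, f1 q) + (∫ q in S, f1 q)
        = 2 * (2 * Real.pi * ((Nat.factorial (2*k) : ℝ) * ((k:ℝ)+1)
          / (2 ^ k * (Nat.factorial k : ℝ)))) := by
      rw [← htotal, ← hsplit, hcompl, claimC, ← claimA]
    linarith
  have hval2 : ∫ q in S, f2 q = 2 * Real.pi * ((Nat.factorial (2*k) : ℝ) * ((k:ℝ)+1)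
      / (2 ^ k * (Nat.factorial k : ℝ))) := by rw [← claimA, hval]
  have hpi : (2 * Real.pi : ℝ) ≠ 0 := by positivity
  constructor
  · rw [hval]; field_simp
  · rw [hval2]; field_simp
end

section
/- For every integer k ≥ 0: (1/(2π)) · ∫∫_{−∞ < u_1 ≤ u_2 < ∞} u_2^{2k+1} · (u_2 − u_1)² · exp(−(u_1² + u_2²)/2) du_1 du_2 = [ (2k+2)! / ( 2^{2k+1} (k+1)! ) + (2k+3) · 2^k · k! · ∑_{j=0}^{k} C(2j, j)/2^{3j} ] / (2√π), and the corresponding integral with u_1^{2k+1} in place of u_2^{2k+1} equals the negative of this value. -/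
open MeasureTheory

namespace Melon
open Set Filter


lemma gbound (m : ℕ) {b : ℝ} (hb : 0 < b) (x : ℝ) :
    |x| ^ m * Real.exp (-b * x ^ 2) ≤
      (m.factorial * Real.exp (1 / (2 * b))) * Real.exp (-(b / 2) * x ^ 2) := by
  have h1 : |x| ^ m ≤ m.factorial * Real.exp |x| := by
    have := Real.pow_div_factorial_le_exp _ (abs_nonneg x) m
    have hf : (0:ℝ) < m.factorial := by positivity
    calc |x| ^ m = |x| ^ m / m.factorial * m.factorial := by field_simp
    _ ≤ Real.exp |x| * m.factorial := by
          exact mul_le_mul_of_nonneg_right this hf.le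
    _ = m.factorial * Real.exp |x| := by ring
  have h2 : Real.exp |x| * Real.exp (-b * x ^ 2) ≤
      Real.exp (1 / (2 * b)) * Real.exp (-(b / 2) * x ^ 2) := by
    rw [← Real.exp_add, ← Real.exp_add]
    apply Real.exp_le_exp.2
    have hx2 : x ^ 2 = |x| ^ 2 := (sq_abs x).symm
    rw [hx2]
    have h4 : 2 * b * |x| ≤ b ^ 2 * |x| ^ 2 + 1 := by nlinarith [sq_nonneg (b * |x| - 1)]
    have hb2 : 2 * b * (1 / (2 * b)) = 1 := by field_simp
    have h5 : |x| ≤ b / 2 * |x| ^ 2 + 1 / (2 * b) := by nlinarith [h4, hb2, hb]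
    linarith
  calc |x| ^ m * Real.exp (-b * x ^ 2) ≤ (m.factorial * Real.exp |x|) * Real.exp (-b * x ^ 2) := by
        apply mul_le_mul_of_nonneg_right h1 (Real.exp_nonneg _)
  _ = m.factorial * (Real.exp |x| * Real.exp (-b * x ^ 2)) := by ring
  _ ≤ m.factorial * (Real.exp (1 / (2 * b)) * Real.exp (-(b / 2) * x ^ 2)) := by
        apply mul_le_mul_of_nonneg_left h2 (by positivity)
  _ = (m.factorial * Real.exp (1 / (2 * b))) * Real.exp (-(b / 2) * x ^ 2) := by ring

lemma ig (m : ℕ) {b : ℝ} (hb : 0 < b) :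
    Integrable fun x : ℝ => x ^ m * Real.exp (-b * x ^ 2) := by
  apply Integrable.mono' (((integrable_exp_neg_mul_sq (half_pos hb)).const_mul
    (m.factorial * Real.exp (1 / (2 * b)))))
  · exact ((continuous_pow m).mul (Continuous.rexp (by continuity))).aestronglyMeasurable
  · filter_upwards with x
    rw [Real.norm_eq_abs, abs_mul, abs_pow, Real.abs_exp]
    exact gbound m hb x

lemma ig2 (m : ℕ) : Integrable fun x : ℝ => x ^ m * Real.exp (-x ^ 2 / 2) := by
  have := ig m (b := 1/2) (by norm_num)
  convert this using 2 with x
  ring_nf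

lemma tendsto_g (m : ℕ) {b : ℝ} (hb : 0 < b) {l : Filter ℝ}
    (hl : Tendsto (fun x : ℝ => x ^ 2) l atTop) :
    Tendsto (fun x : ℝ => x ^ m * Real.exp (-b * x ^ 2)) l (nhds 0) := by
  have hB : Tendsto (fun x : ℝ => (m.factorial * Real.exp (1 / (2 * b))) *
      Real.exp (-(b / 2) * x ^ 2)) l (nhds 0) := by
    rw [show (0:ℝ) = (m.factorial * Real.exp (1 / (2 * b))) * 0 by ring]
    apply Tendsto.const_mul
    simp only [neg_mul]
    apply Real.tendsto_exp_atBot.comp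
    apply Filter.tendsto_neg_atTop_atBot.comp
    exact (Filter.Tendsto.const_mul_atTop (half_pos hb) hl)
  have hBneg := hB.neg
  rw [neg_zero] at hBneg
  refine tendsto_of_tendsto_of_tendsto_of_le_of_le hBneg hB ?_ ?_
  · intro x
    have := gbound m hb x
    have h2 : |x ^ m * Real.exp (-b * x ^ 2)| ≤
        (m.factorial * Real.exp (1 / (2 * b))) * Real.exp (-(b / 2) * x ^ 2) := by
      rwa [abs_mul, abs_pow, Real.abs_exp]
    linarith [neg_abs_le (x ^ m * Real.exp (-b * x ^ 2))]
  · intro x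
    have := gbound m hb x
    have h2 : |x ^ m * Real.exp (-b * x ^ 2)| ≤
        (m.factorial * Real.exp (1 / (2 * b))) * Real.exp (-(b / 2) * x ^ 2) := by
      rwa [abs_mul, abs_pow, Real.abs_exp]
    linarith [le_abs_self (x ^ m * Real.exp (-b * x ^ 2))]

lemma sq_tendsto_atTop : Tendsto (fun x : ℝ => x ^ 2) atTop atTop := by
  exact tendsto_pow_atTop two_ne_zero

lemma sq_tendsto_atBot : Tendsto (fun x : ℝ => x ^ 2) atBot atTop := by
  have : (fun x : ℝ => x ^ 2) = (fun y : ℝ => y ^ 2) ∘ (fun x : ℝ => |x|) := by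
    funext x; simp [sq_abs]
  rw [this]
  exact (tendsto_pow_atTop two_ne_zero).comp tendsto_abs_atBot_atTop


lemma contg : Continuous fun x : ℝ => Real.exp (-x ^ 2 / 2) := by continuity

lemma tendsto_g2 (m : ℕ) {l : Filter ℝ} (hl : Tendsto (fun x : ℝ => x ^ 2) l atTop) :
    Tendsto (fun x : ℝ => x ^ m * Real.exp (-x ^ 2 / 2)) l (nhds 0) := by
  have := tendsto_g m (b := 1/2) (by norm_num) hl
  convert this using 2 with x
  ring_nf

noncomputable def Hh (y : ℝ) : ℝ := ∫ t in (0:ℝ)..y, Real.exp (-t ^ 2 / 2)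

lemma Hh_hasDeriv (y : ℝ) : HasDerivAt Hh (Real.exp (-y ^ 2 / 2)) y := by
  exact intervalIntegral.integral_hasDerivAt_right
    (contg.intervalIntegrable _ _) (contg.stronglyMeasurableAtFilter _ _)
    contg.continuousAt

lemma Hh_cont : Continuous Hh := by
  have : Differentiable ℝ Hh := fun y => (Hh_hasDeriv y).differentiableAt
  exact this.continuous

lemma Hh_abs_le (y : ℝ) : |Hh y| ≤ |y| := by
  have := intervalIntegral.norm_integral_le_of_norm_le_const
    (C := 1) (f := fun t : ℝ => Real.exp (-t ^ 2 / 2)) (a := 0) (b := y) ?_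
  · simpa [Hh] using this
  · intro t _
    rw [Real.norm_eq_abs, Real.abs_exp]
    exact Real.exp_le_one_iff.2 (by nlinarith [sq_nonneg t])

lemma Hh_odd (y : ℝ) : Hh (-y) = -Hh y := by
  have h1 : (∫ x in (0:ℝ)..y, Real.exp (-(-x) ^ 2 / 2)) = ∫ x in (-y)..(-(0:ℝ)), Real.exp (-x ^ 2 / 2) :=
    intervalIntegral.integral_comp_neg fun x => Real.exp (-x ^ 2 / 2)
  simp only [neg_sq, neg_zero] at h1
  unfold Hh
  rw [intervalIntegral.integral_symm, ← h1]

noncomputable def Phi (y : ℝ) : ℝ := ∫ x in Iic y, Real.exp (-x ^ 2 / 2)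

lemma total_gauss : (∫ x : ℝ, Real.exp (-x ^ 2 / 2)) = Real.sqrt (2 * Real.pi) := by
  have := integral_gaussian (1/2)
  rw [show Real.pi / (1/2) = 2 * Real.pi by ring] at this
  rw [← this]
  congr 1 with x
  ring_nf

lemma Phi_zero : Phi 0 = Real.sqrt (2 * Real.pi) / 2 := by
  have hsplit : Phi 0 + (∫ x in Ioi (0:ℝ), Real.exp (-x ^ 2 / 2)) = Real.sqrt (2 * Real.pi) := by
    rw [← total_gauss]
    have h0 : Integrable fun x : ℝ => Real.exp (-x ^ 2 / 2) := by
      simpa using ig2 0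
    exact intervalIntegral.integral_Iic_add_Ioi h0.integrableOn h0.integrableOn
  have hrefl : (∫ x in Ioi (0:ℝ), Real.exp (-x ^ 2 / 2)) = Phi 0 := by
    have := integral_comp_neg_Iic (0:ℝ) (fun x => Real.exp (-x ^ 2 / 2))
    simp only [neg_sq, neg_zero] at this
    rw [← this]; rfl
  rw [hrefl] at hsplit
  linarith

lemma Phi_eq (y : ℝ) : Phi y = Real.sqrt (2 * Real.pi) / 2 + Hh y := by
  have h0 : Integrable fun x : ℝ => Real.exp (-x ^ 2 / 2) := by simpa using ig2 0
  have h := intervalIntegral.integral_Iic_sub_Iic (μ := volume) (a := (0:ℝ)) (b := y)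
    h0.integrableOn h0.integrableOn
  have : Phi y - Phi 0 = Hh y := h
  rw [← Phi_zero]
  linarith

lemma ig1 (m : ℕ) : Integrable fun x : ℝ => x ^ m * Real.exp (-x ^ 2) := by
  have := ig m (b := 1) one_pos
  convert this using 2 with x
  ring_nf

lemma tendsto_g1 (m : ℕ) {l : Filter ℝ} (hl : Tendsto (fun x : ℝ => x ^ 2) l atTop) :
    Tendsto (fun x : ℝ => x ^ m * Real.exp (-x ^ 2)) l (nhds 0) := by
  have := tendsto_g m (b := 1) one_pos hl
  convert this using 2 with x
  ring_nf

lemma hdg1 (x : ℝ) : HasDerivAt (fun x : ℝ => Real.exp (-x ^ 2)) (-2 * x * Real.exp (-x ^ 2)) x := by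
  have h1 : HasDerivAt (fun x : ℝ => -x ^ 2) (-2 * x) x := by
    have := (hasDerivAt_pow 2 x).neg
    refine this.congr_deriv ?_
    ring
  have := h1.exp
  convert this using 1
  ring

lemma hdg (x : ℝ) : HasDerivAt (fun x : ℝ => Real.exp (-x ^ 2 / 2)) (-x * Real.exp (-x ^ 2 / 2)) x := by
  have h1 : HasDerivAt (fun x : ℝ => -x ^ 2 / 2) (-x) x := by
    have := ((hasDerivAt_pow 2 x).neg).div_const 2
    refine this.congr_deriv ?_
    ring
  have := h1.exp
  convert this using 1
  ring

lemma Mo (n : ℕ) : ∫ x : ℝ, x ^ (2 * n) * Real.exp (-x ^ 2)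
    = Real.sqrt Real.pi * (2 * n).factorial / (4 ^ n * n.factorial) := by
  induction n with
  | zero =>
    simp only [Nat.mul_zero, pow_zero, one_mul, Nat.factorial_zero, Nat.cast_one, mul_one, div_one]
    have := integral_gaussian 1
    simp only [div_one] at this
    rw [← this]
    congr 1 with x
    ring_nf
  | succ n ihn =>
    set F := fun x : ℝ => x ^ (2 * n + 1) * Real.exp (-x ^ 2) with hFdef
    have hF : ∀ x : ℝ, HasDerivAt F
        ((2 * n + 1 : ℝ) * (x ^ (2 * n) * Real.exp (-x ^ 2))
          - 2 * (x ^ (2 * n + 2) * Real.exp (-x ^ 2))) x := by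
      intro x
      have := (hasDerivAt_pow (2 * n + 1) x).mul (hdg1 x)
      refine this.congr_deriv ?_
      simp only [Nat.add_sub_cancel]
      push_cast
      ring
    have hD : Integrable fun x : ℝ => (2 * n + 1 : ℝ) * (x ^ (2 * n) * Real.exp (-x ^ 2))
        - 2 * (x ^ (2 * n + 2) * Real.exp (-x ^ 2)) :=
      ((ig1 (2 * n)).const_mul _).sub ((ig1 (2 * n + 2)).const_mul _)
    have hz : (∫ x : ℝ, ((2 * n + 1 : ℝ) * (x ^ (2 * n) * Real.exp (-x ^ 2))
        - 2 * (x ^ (2 * n + 2) * Real.exp (-x ^ 2)))) = 0 := by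
      have := integral_of_hasDerivAt_of_tendsto hF hD
        (tendsto_g1 (2 * n + 1) sq_tendsto_atBot) (tendsto_g1 (2 * n + 1) sq_tendsto_atTop)
      simpa using this
    rw [integral_sub ((ig1 (2 * n)).const_mul _) ((ig1 (2 * n + 2)).const_mul _),
        integral_const_mul, integral_const_mul, ihn] at hz
    have h2 : (∫ x : ℝ, x ^ (2 * n + 2) * Real.exp (-x ^ 2))
        = (2 * n + 1 : ℝ) * (Real.sqrt Real.pi * (2 * n).factorial / (4 ^ n * n.factorial)) / 2 := by
      linarith
    have hexp : 2 * (n + 1) = 2 * n + 2 := by ring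
    rw [hexp, h2]
    have e1 : ((2 * n + 2).factorial : ℝ)
        = (2 * n + 2) * (2 * n + 1) * (2 * n).factorial := by
      rw [show 2 * n + 2 = (2 * n + 1) + 1 from rfl, Nat.factorial_succ, Nat.factorial_succ]
      push_cast
      ring
    rw [e1, Nat.factorial_succ]
    have h4 : (4 : ℝ) ^ (n + 1) = 4 * 4 ^ n := by ring
    rw [h4]
    have hfn : ((n.factorial : ℝ)) ≠ 0 := Nat.cast_ne_zero.2 n.factorial_ne_zero
    have h4n : (4 : ℝ) ^ n ≠ 0 := by positivity
    push_cast
    field_simp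
    ring

lemma Zo (m : ℕ) : ∫ x : ℝ, x ^ (2 * m + 1) * Real.exp (-x ^ 2 / 2) = 0 := by
  have h := integral_neg_eq_self (fun x : ℝ => x ^ (2 * m + 1) * Real.exp (-x ^ 2 / 2)) volume
  have h2 : (∫ x : ℝ, (-x) ^ (2 * m + 1) * Real.exp (-(-x) ^ 2 / 2))
      = -∫ x : ℝ, x ^ (2 * m + 1) * Real.exp (-x ^ 2 / 2) := by
    rw [← integral_neg]
    congr 1 with x
    rw [Odd.neg_pow (odd_two_mul_add_one m)]
    ring_nf
  rw [h2] at h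
  linarith

lemma hexp0 : Integrable fun x : ℝ => Real.exp (-x ^ 2 / 2) := by simpa using ig2 0

lemma intIic1 (y : ℝ) :
    ∫ x in Iic y, x * Real.exp (-x ^ 2 / 2) = -Real.exp (-y ^ 2 / 2) := by
  have hd : ∀ x ∈ Iic y, HasDerivAt (fun x : ℝ => -Real.exp (-x ^ 2 / 2))
      (x * Real.exp (-x ^ 2 / 2)) x := by
    intro x _
    have := (hdg x).neg
    refine this.congr_deriv ?_
    ring
  have hint : Integrable fun x : ℝ => x * Real.exp (-x ^ 2 / 2) := by simpa using ig2 1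
  have htb : Tendsto (fun x : ℝ => -Real.exp (-x ^ 2 / 2)) atBot (nhds 0) := by
    have := (tendsto_g2 0 sq_tendsto_atBot).neg
    simpa using this
  have := integral_Iic_of_hasDerivAt_of_tendsto' hd hint.integrableOn htb
  simpa using this

lemma intIic2 (y : ℝ) :
    ∫ x in Iic y, x ^ 2 * Real.exp (-x ^ 2 / 2) = Phi y - y * Real.exp (-y ^ 2 / 2) := by
  have hd : ∀ x ∈ Iic y, HasDerivAt (fun x : ℝ => -(x * Real.exp (-x ^ 2 / 2)))
      (x ^ 2 * Real.exp (-x ^ 2 / 2) - Real.exp (-x ^ 2 / 2)) x := by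
    intro x _
    have := ((hasDerivAt_id x).mul (hdg x)).neg
    refine this.congr_deriv ?_
    simp only [id_eq]
    ring
  have hint : Integrable fun x : ℝ => x ^ 2 * Real.exp (-x ^ 2 / 2) - Real.exp (-x ^ 2 / 2) :=
    (ig2 2).sub hexp0
  have htb : Tendsto (fun x : ℝ => -(x * Real.exp (-x ^ 2 / 2))) atBot (nhds 0) := by
    have := (tendsto_g2 1 sq_tendsto_atBot).neg
    simpa using this
  have h := integral_Iic_of_hasDerivAt_of_tendsto' hd hint.integrableOn htb
  rw [integral_sub ((ig2 2).integrableOn) (hexp0.integrableOn)] at h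
  have : (∫ x in Iic y, Real.exp (-x ^ 2 / 2)) = Phi y := rfl
  rw [this] at h
  simp only [sub_zero] at h
  linarith

lemma inner_eq (y : ℝ) :
    ∫ x in Iic y, (y - x) ^ 2 * Real.exp (-x ^ 2 / 2)
      = (y ^ 2 + 1) * Phi y + y * Real.exp (-y ^ 2 / 2) := by
  have hrw : ∀ x : ℝ, (y - x) ^ 2 * Real.exp (-x ^ 2 / 2)
      = y ^ 2 * Real.exp (-x ^ 2 / 2) + (-2 * y) * (x * Real.exp (-x ^ 2 / 2))
        + x ^ 2 * Real.exp (-x ^ 2 / 2) := by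
    intro x; ring
  rw [setIntegral_congr_fun measurableSet_Iic (fun x _ => hrw x)]
  have h1 : IntegrableOn (fun x : ℝ => y ^ 2 * Real.exp (-x ^ 2 / 2)) (Iic y) :=
    (hexp0.const_mul _).integrableOn
  have hmul1 : Integrable fun x : ℝ => x * Real.exp (-x ^ 2 / 2) := by simpa using ig2 1
  have h2 : IntegrableOn (fun x : ℝ => (-2 * y) * (x * Real.exp (-x ^ 2 / 2))) (Iic y) :=
    (hmul1.const_mul _).integrableOn
  have h3 : IntegrableOn (fun x : ℝ => x ^ 2 * Real.exp (-x ^ 2 / 2)) (Iic y) :=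
    (ig2 2).integrableOn
  have h12 : IntegrableOn (fun x : ℝ => y ^ 2 * Real.exp (-x ^ 2 / 2)
      + (-2 * y) * (x * Real.exp (-x ^ 2 / 2))) (Iic y) := h1.add h2
  rw [integral_add h12 h3, integral_add h1 h2, integral_const_mul, integral_const_mul,
    intIic1, intIic2]
  have hphi : (∫ x in Iic y, Real.exp (-x ^ 2 / 2)) = Phi y := rfl
  rw [hphi]
  ring

lemma boundH (m : ℕ) (y : ℝ) : ‖y ^ m * Real.exp (-y ^ 2 / 2) * Hh y‖ ≤
    ((m + 1).factorial * Real.exp 1) * Real.exp (-(1 / 4) * y ^ 2) := by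
  have h0 : ‖y ^ m * Real.exp (-y ^ 2 / 2) * Hh y‖ ≤ |y| ^ (m + 1) * Real.exp (-(1/2 : ℝ) * y ^ 2) := by
    rw [Real.norm_eq_abs, abs_mul, abs_mul, abs_pow, Real.abs_exp]
    have he : Real.exp (-y ^ 2 / 2) = Real.exp (-(1/2 : ℝ) * y ^ 2) := by ring_nf
    rw [he, pow_succ]
    calc |y| ^ m * Real.exp (-(1/2 : ℝ) * y ^ 2) * |Hh y|
        ≤ |y| ^ m * Real.exp (-(1/2 : ℝ) * y ^ 2) * |y| := by
          apply mul_le_mul_of_nonneg_left (Hh_abs_le y) (by positivity)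
      _ = |y| ^ m * |y| * Real.exp (-(1/2 : ℝ) * y ^ 2) := by ring
  refine h0.trans ?_
  have := gbound (m + 1) (b := 1/2) (by norm_num) y
  norm_num at this ⊢
  convert this using 3 <;> norm_num

lemma igH (m : ℕ) : Integrable fun y : ℝ => y ^ m * Real.exp (-y ^ 2 / 2) * Hh y := by
  apply Integrable.mono' ((integrable_exp_neg_mul_sq (by norm_num : (0:ℝ) < 1/4)).const_mul
    ((m + 1).factorial * Real.exp 1))
  · exact (((continuous_pow m).mul contg).mul Hh_cont).aestronglyMeasurable
  · filter_upwards with y using boundH m y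

lemma tendH (m : ℕ) {l : Filter ℝ} (hl : Tendsto (fun x : ℝ => x ^ 2) l atTop) :
    Tendsto (fun y : ℝ => y ^ m * Real.exp (-y ^ 2 / 2) * Hh y) l (nhds 0) := by
  apply squeeze_zero_norm (boundH m)
  have h := (tendsto_g 0 (b := 1/4) (by norm_num) hl).const_mul (((m + 1).factorial : ℝ) * Real.exp 1)
  simpa using h

lemma Tval (n : ℕ) : ∫ y : ℝ, y ^ (2 * n + 1) * Real.exp (-y ^ 2 / 2) * Hh y
    = Real.sqrt Real.pi * n.factorial * 2 ^ n *
      ∑ j ∈ Finset.range (n + 1), ((2 * j).choose j : ℝ) / 2 ^ (3 * j) := by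
  induction n with
  | zero =>
    have hF : ∀ y : ℝ, HasDerivAt (fun y : ℝ => -(Real.exp (-y ^ 2 / 2) * Hh y))
        (y ^ 1 * Real.exp (-y ^ 2 / 2) * Hh y - y ^ (2 * 0) * Real.exp (-y ^ 2)) y := by
      intro y
      have := ((hdg y).mul (Hh_hasDeriv y)).neg
      refine this.congr_deriv ?_
      rw [← Real.exp_add]
      ring_nf
    have hD : Integrable fun y : ℝ =>
        y ^ 1 * Real.exp (-y ^ 2 / 2) * Hh y - y ^ (2 * 0) * Real.exp (-y ^ 2) :=
      (igH 1).sub (ig1 (2 * 0))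
    have htb : Tendsto (fun y : ℝ => -(Real.exp (-y ^ 2 / 2) * Hh y)) atBot (nhds 0) := by
      have := (tendH 0 sq_tendsto_atBot).neg
      simpa using this
    have htt : Tendsto (fun y : ℝ => -(Real.exp (-y ^ 2 / 2) * Hh y)) atTop (nhds 0) := by
      have := (tendH 0 sq_tendsto_atTop).neg
      simpa using this
    have hz := integral_of_hasDerivAt_of_tendsto hF hD htb htt
    rw [sub_zero, integral_sub (igH 1) (ig1 (2 * 0)), Mo 0] at hz
    norm_num at hz ⊢
    linarith
  | succ n ihn =>
    have hA : Integrable fun y : ℝ => y ^ (2 * (n + 1) + 1) * Real.exp (-y ^ 2 / 2) * Hh y :=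
      igH _
    have hB : Integrable fun y : ℝ =>
        (2 * (n : ℝ) + 2) * (y ^ (2 * n + 1) * Real.exp (-y ^ 2 / 2) * Hh y) :=
      (igH (2 * n + 1)).const_mul _
    have hC : Integrable fun y : ℝ => y ^ (2 * (n + 1)) * Real.exp (-y ^ 2) := ig1 _
    have hAB : Integrable fun y : ℝ =>
        y ^ (2 * (n + 1) + 1) * Real.exp (-y ^ 2 / 2) * Hh y
          - (2 * (n : ℝ) + 2) * (y ^ (2 * n + 1) * Real.exp (-y ^ 2 / 2) * Hh y) := hA.sub hB
    have hF : ∀ y : ℝ, HasDerivAt (fun y : ℝ => -(y ^ (2 * n + 2) * Real.exp (-y ^ 2 / 2) * Hh y))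
        (y ^ (2 * (n + 1) + 1) * Real.exp (-y ^ 2 / 2) * Hh y
          - (2 * (n : ℝ) + 2) * (y ^ (2 * n + 1) * Real.exp (-y ^ 2 / 2) * Hh y)
          - y ^ (2 * (n + 1)) * Real.exp (-y ^ 2)) y := by
      intro y
      have := (((hasDerivAt_pow (2 * n + 2) y).mul (hdg y)).mul (Hh_hasDeriv y)).neg
      refine this.congr_deriv ?_
      rw [show Real.exp (-y ^ 2) = Real.exp (-y ^ 2 / 2) * Real.exp (-y ^ 2 / 2) by
        rw [← Real.exp_add]; ring_nf, show 2 * n + 2 - 1 = 2 * n + 1 by omega]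
      simp only [Pi.mul_apply]
      push_cast
      ring
    have hD : Integrable fun y : ℝ =>
        y ^ (2 * (n + 1) + 1) * Real.exp (-y ^ 2 / 2) * Hh y
          - (2 * (n : ℝ) + 2) * (y ^ (2 * n + 1) * Real.exp (-y ^ 2 / 2) * Hh y)
          - y ^ (2 * (n + 1)) * Real.exp (-y ^ 2) := hAB.sub hC
    have htb : Tendsto (fun y : ℝ => -(y ^ (2 * n + 2) * Real.exp (-y ^ 2 / 2) * Hh y))
        atBot (nhds 0) := by
      have := (tendH (2 * n + 2) sq_tendsto_atBot).neg
      simpa using this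
    have htt : Tendsto (fun y : ℝ => -(y ^ (2 * n + 2) * Real.exp (-y ^ 2 / 2) * Hh y))
        atTop (nhds 0) := by
      have := (tendH (2 * n + 2) sq_tendsto_atTop).neg
      simpa using this
    have hz := integral_of_hasDerivAt_of_tendsto hF hD htb htt
    rw [sub_zero, integral_sub hAB hC, integral_sub hA hB, integral_const_mul, ihn, Mo (n + 1)] at hz
    rw [Finset.sum_range_succ]
    have hzz : (∫ y : ℝ, y ^ (2 * (n + 1) + 1) * Real.exp (-y ^ 2 / 2) * Hh y)
        = (2 * (n : ℝ) + 2) *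
            (Real.sqrt Real.pi * n.factorial * 2 ^ n *
              ∑ j ∈ Finset.range (n + 1), ((2 * j).choose j : ℝ) / 2 ^ (3 * j))
          + Real.sqrt Real.pi * (2 * (n + 1)).factorial / (4 ^ (n + 1) * (n + 1).factorial) := by
      linarith
    rw [hzz]
    have hch : ((2 * (n + 1)).choose (n + 1) : ℝ) * ((n + 1).factorial : ℝ) * ((n + 1).factorial : ℝ)
        = ((2 * (n + 1)).factorial : ℝ) := by
      have h := Nat.choose_mul_factorial_mul_factorial
        (show n + 1 ≤ 2 * (n + 1) by omega)
      have h2 : ((2 * (n + 1)).choose (n + 1) * (n + 1).factorial * ((2 * (n + 1)) - (n + 1)).factorial : ℕ)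
          = (2 * (n + 1)).factorial := h
      rw [show 2 * (n + 1) - (n + 1) = n + 1 by omega] at h2
      exact_mod_cast congrArg (Nat.cast : ℕ → ℝ) h2
    have hfn1 : (((n + 1).factorial : ℝ)) ≠ 0 := Nat.cast_ne_zero.2 (n + 1).factorial_ne_zero
    have hc2 : ((2 * (n + 1)).choose (n + 1) : ℝ)
        = ((2 * (n + 1)).factorial : ℝ) / (((n + 1).factorial : ℝ) * ((n + 1).factorial : ℝ)) := by
      rw [eq_div_iff (by positivity)]
      linear_combination hch
    have hfact : ((n + 1).factorial : ℝ) = ((n : ℝ) + 1) * n.factorial := by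
      rw [Nat.factorial_succ]; push_cast; ring
    have hfn : ((n.factorial : ℝ)) ≠ 0 := Nat.cast_ne_zero.2 n.factorial_ne_zero
    have hpow : ((2 : ℝ)) ^ (3 * (n + 1)) = 4 ^ (n + 1) * 2 ^ (n + 1) := by
      rw [show 3 * (n + 1) = 2 * (n + 1) + (n + 1) by ring, pow_add, pow_mul]
      norm_num
    have h4n : ((4 : ℝ)) ^ (n + 1) ≠ 0 := by positivity
    have h2n : ((2 : ℝ)) ^ (n + 1) ≠ 0 := by positivity
    rw [hc2, hfact, hpow]
    field_simp
    ring

lemma exp_split (a b : ℝ) : Real.exp (-(a ^ 2 + b ^ 2) / 2)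
    = Real.exp (-a ^ 2 / 2) * Real.exp (-b ^ 2 / 2) := by
  rw [← Real.exp_add]; ring_nf

lemma hs_meas : MeasurableSet {q : ℝ × ℝ | q.1 ≤ q.2} :=
  (isClosed_le continuous_fst continuous_snd).measurableSet

lemma fub (n : ℕ) :
    (∫ q in {q : ℝ × ℝ | q.1 ≤ q.2},
        q.2 ^ n * (q.2 - q.1) ^ 2 * Real.exp (-(q.1 ^ 2 + q.2 ^ 2) / 2))
      = ∫ y : ℝ, y ^ n * Real.exp (-y ^ 2 / 2) *
          ∫ x in Iic y, (y - x) ^ 2 * Real.exp (-x ^ 2 / 2) := by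
  set F := fun q : ℝ × ℝ => q.2 ^ n * (q.2 - q.1) ^ 2 * Real.exp (-(q.1 ^ 2 + q.2 ^ 2) / 2)
    with hFdef
  have hFeq : ∀ q : ℝ × ℝ, F q
      = (q.1 ^ 2 * Real.exp (-q.1 ^ 2 / 2)) * (q.2 ^ n * Real.exp (-q.2 ^ 2 / 2))
        + (-2) * ((q.1 * Real.exp (-q.1 ^ 2 / 2)) * (q.2 ^ (n + 1) * Real.exp (-q.2 ^ 2 / 2)))
        + (Real.exp (-q.1 ^ 2 / 2)) * (q.2 ^ (n + 2) * Real.exp (-q.2 ^ 2 / 2)) := by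
    intro q
    rw [hFdef]
    simp only
    rw [exp_split]
    ring
  have hexp0 : Integrable fun x : ℝ => Real.exp (-x ^ 2 / 2) := by simpa using ig2 0
  have hmul1 : Integrable fun x : ℝ => x * Real.exp (-x ^ 2 / 2) := by simpa using ig2 1
  have hP1 : Integrable (fun q : ℝ × ℝ =>
      (q.1 ^ 2 * Real.exp (-q.1 ^ 2 / 2)) * (q.2 ^ n * Real.exp (-q.2 ^ 2 / 2))) := by
    rw [Measure.volume_eq_prod]
    exact (ig2 2).mul_prod (ig2 n)
  have hP2 : Integrable (fun q : ℝ × ℝ =>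
      (-2 : ℝ) * ((q.1 * Real.exp (-q.1 ^ 2 / 2)) * (q.2 ^ (n + 1) * Real.exp (-q.2 ^ 2 / 2)))) := by
    rw [Measure.volume_eq_prod]
    exact (hmul1.mul_prod (ig2 (n + 1))).const_mul _
  have hP3 : Integrable (fun q : ℝ × ℝ =>
      (Real.exp (-q.1 ^ 2 / 2)) * (q.2 ^ (n + 2) * Real.exp (-q.2 ^ 2 / 2))) := by
    rw [Measure.volume_eq_prod]
    exact hexp0.mul_prod (ig2 (n + 2))
  have hint : Integrable F := by
    have : Integrable (fun q : ℝ × ℝ =>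
        (q.1 ^ 2 * Real.exp (-q.1 ^ 2 / 2)) * (q.2 ^ n * Real.exp (-q.2 ^ 2 / 2))
        + (-2 : ℝ) * ((q.1 * Real.exp (-q.1 ^ 2 / 2)) * (q.2 ^ (n + 1) * Real.exp (-q.2 ^ 2 / 2)))
        + (Real.exp (-q.1 ^ 2 / 2)) * (q.2 ^ (n + 2) * Real.exp (-q.2 ^ 2 / 2))) :=
      (hP1.add hP2).add hP3
    exact this.congr (Eventually.of_forall fun q => (hFeq q).symm)
  have hind : Integrable ({q : ℝ × ℝ | q.1 ≤ q.2}.indicator F) := hint.indicator hs_meas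
  rw [← integral_indicator hs_meas]
  rw [Measure.volume_eq_prod] at hind ⊢
  rw [integral_prod_symm _ hind]
  apply integral_congr_ae
  filter_upwards with y
  have h1 : (fun x : ℝ => {q : ℝ × ℝ | q.1 ≤ q.2}.indicator F (x, y))
      = (Iic y).indicator (fun x : ℝ => F (x, y)) := by
    funext x
    by_cases h : x ≤ y <;> simp [Set.indicator_apply, Set.mem_setOf_eq, Set.mem_Iic, h]
  rw [h1, integral_indicator measurableSet_Iic]
  rw [← integral_const_mul]
  apply setIntegral_congr_fun measurableSet_Iic
  intro x _
  rw [hFdef]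
  simp only
  rw [exp_split]
  ring

lemma part2 (m : ℕ) (hm : Odd m) :
    (∫ q in {q : ℝ × ℝ | q.1 ≤ q.2},
        q.1 ^ m * (q.2 - q.1) ^ 2 * Real.exp (-(q.1 ^ 2 + q.2 ^ 2) / 2))
      = - ∫ q in {q : ℝ × ℝ | q.1 ≤ q.2},
          q.2 ^ m * (q.2 - q.1) ^ 2 * Real.exp (-(q.1 ^ 2 + q.2 ^ 2) / 2) := by
  set s := {q : ℝ × ℝ | q.1 ≤ q.2} with hsdef
  set g := fun q : ℝ × ℝ => q.2 ^ m * (q.2 - q.1) ^ 2 * Real.exp (-(q.1 ^ 2 + q.2 ^ 2) / 2)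
    with hgdef
  let em : ℝ × ℝ ≃ᵐ ℝ × ℝ := (MeasurableEquiv.prodComm (α := ℝ) (β := ℝ)).trans (MeasurableEquiv.neg (ℝ × ℝ))
  have hcoe : ∀ p : ℝ × ℝ, em p = (-p.2, -p.1) := fun p => rfl
  have hswap : MeasurePreserving (Prod.swap : ℝ × ℝ → ℝ × ℝ) volume volume := by
    rw [Measure.volume_eq_prod]
    exact Measure.measurePreserving_swap
  have hneg : MeasurePreserving (fun p : ℝ × ℝ => -p) volume volume := by
    have h := (Measure.measurePreserving_neg (volume : Measure ℝ)).prod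
      (Measure.measurePreserving_neg (volume : Measure ℝ))
    rw [← Measure.volume_eq_prod] at h
    exact h
  have hmp : MeasurePreserving (em : ℝ × ℝ → ℝ × ℝ) volume volume := by
    have h := hneg.comp hswap
    exact h
  have hpre : (em : ℝ × ℝ → ℝ × ℝ) ⁻¹' s = s := by
    ext p
    simp only [Set.mem_preimage, hcoe, hsdef, Set.mem_setOf_eq]
    constructor <;> intro h <;> linarith
  have h := hmp.setIntegral_preimage_emb em.measurableEmbedding g s
  rw [hpre] at h
  have h2 : ∀ p : ℝ × ℝ, g (em p) = -(p.1 ^ m * (p.2 - p.1) ^ 2 *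
      Real.exp (-(p.1 ^ 2 + p.2 ^ 2) / 2)) := by
    intro p
    rw [hcoe, hgdef]
    simp only
    rw [hm.neg_pow]
    ring_nf
  rw [setIntegral_congr_fun hs_meas (fun p _ => h2 p)] at h
  rw [integral_neg] at h
  linarith

lemma Aval (k : ℕ) :
    (∫ q in {q : ℝ × ℝ | q.1 ≤ q.2},
        q.2 ^ (2 * k + 1) * (q.2 - q.1) ^ 2 * Real.exp (-(q.1 ^ 2 + q.2 ^ 2) / 2))
      = Real.sqrt Real.pi * (k + 1).factorial * 2 ^ (k + 1) *
          (∑ j ∈ Finset.range (k + 2), ((2 * j).choose j : ℝ) / 2 ^ (3 * j))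
        + Real.sqrt Real.pi * k.factorial * 2 ^ k *
          (∑ j ∈ Finset.range (k + 1), ((2 * j).choose j : ℝ) / 2 ^ (3 * j))
        + Real.sqrt Real.pi * (2 * k + 2).factorial / (4 ^ (k + 1) * (k + 1).factorial) := by
  set c : ℝ := Real.sqrt (2 * Real.pi) / 2 with hc
  rw [fub (2 * k + 1)]
  have hpt : (fun y : ℝ => y ^ (2 * k + 1) * Real.exp (-y ^ 2 / 2) *
      ∫ x in Iic y, (y - x) ^ 2 * Real.exp (-x ^ 2 / 2))
      = fun y : ℝ =>
        (y ^ (2 * k + 3) * Real.exp (-y ^ 2 / 2) * Hh y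
          + y ^ (2 * k + 1) * Real.exp (-y ^ 2 / 2) * Hh y)
        + (c * (y ^ (2 * k + 3) * Real.exp (-y ^ 2 / 2))
          + c * (y ^ (2 * k + 1) * Real.exp (-y ^ 2 / 2)))
        + y ^ (2 * k + 2) * Real.exp (-y ^ 2) := by
    funext y
    rw [inner_eq y, Phi_eq y, ← hc]
    rw [show Real.exp (-y ^ 2) = Real.exp (-y ^ 2 / 2) * Real.exp (-y ^ 2 / 2) by
      rw [← Real.exp_add]; ring_nf]
    ring
  rw [hpt]
  have hA : Integrable fun y : ℝ => y ^ (2 * k + 3) * Real.exp (-y ^ 2 / 2) * Hh y := igH _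
  have hB : Integrable fun y : ℝ => y ^ (2 * k + 1) * Real.exp (-y ^ 2 / 2) * Hh y := igH _
  have hC1 : Integrable fun y : ℝ => c * (y ^ (2 * k + 3) * Real.exp (-y ^ 2 / 2)) :=
    (ig2 _).const_mul _
  have hC2 : Integrable fun y : ℝ => c * (y ^ (2 * k + 1) * Real.exp (-y ^ 2 / 2)) :=
    (ig2 _).const_mul _
  have hD : Integrable fun y : ℝ => y ^ (2 * k + 2) * Real.exp (-y ^ 2) := ig1 _
  have hAB : Integrable fun y : ℝ => y ^ (2 * k + 3) * Real.exp (-y ^ 2 / 2) * Hh y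
      + y ^ (2 * k + 1) * Real.exp (-y ^ 2 / 2) * Hh y := hA.add hB
  have hC12 : Integrable fun y : ℝ => c * (y ^ (2 * k + 3) * Real.exp (-y ^ 2 / 2))
      + c * (y ^ (2 * k + 1) * Real.exp (-y ^ 2 / 2)) := hC1.add hC2
  have hABC : Integrable fun y : ℝ =>
      (y ^ (2 * k + 3) * Real.exp (-y ^ 2 / 2) * Hh y
        + y ^ (2 * k + 1) * Real.exp (-y ^ 2 / 2) * Hh y)
      + (c * (y ^ (2 * k + 3) * Real.exp (-y ^ 2 / 2))
        + c * (y ^ (2 * k + 1) * Real.exp (-y ^ 2 / 2))) := hAB.add hC12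
  rw [integral_add hABC hD, integral_add hAB hC12, integral_add hA hB, integral_add hC1 hC2,
    integral_const_mul, integral_const_mul]
  have z1 := Zo (k + 1)
  rw [show 2 * (k + 1) + 1 = 2 * k + 3 by ring] at z1
  have z0 := Zo k
  have t1 := Tval (k + 1)
  rw [show 2 * (k + 1) + 1 = 2 * k + 3 by ring] at t1
  have t0 := Tval k
  have m1 := Mo (k + 1)
  rw [show 2 * (k + 1) = 2 * k + 2 by ring] at m1
  rw [z1, z0, t1, t0, m1]
  ring

theorem melonNW2_odd_moment_first (k : ℕ) :
    (1 / (2 * Real.pi) *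
        (∫ q in {q : ℝ × ℝ | q.1 ≤ q.2},
          q.2 ^ (2 * k + 1) * (q.2 - q.1) ^ 2 * Real.exp (-(q.1 ^ 2 + q.2 ^ 2) / 2))
      = ((Nat.factorial (2 * k + 2) : ℝ) / (2 ^ (2 * k + 1) * (Nat.factorial (k + 1) : ℝ))
            + (2 * (k : ℝ) + 3) * 2 ^ k * (Nat.factorial k : ℝ) *
              ∑ j ∈ Finset.range (k + 1), (Nat.choose (2 * j) j : ℝ) / 2 ^ (3 * j))
          / (2 * Real.sqrt Real.pi)) := by
  rw [Aval k, Finset.sum_range_succ]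
  set S : ℝ := ∑ j ∈ Finset.range (k + 1), ((2 * j).choose j : ℝ) / 2 ^ (3 * j) with hS
  have hch : ((2 * (k + 1)).choose (k + 1) : ℝ) * ((k + 1).factorial : ℝ) * ((k + 1).factorial : ℝ)
      = ((2 * k + 2).factorial : ℝ) := by
    have h := Nat.choose_mul_factorial_mul_factorial (show k + 1 ≤ 2 * (k + 1) by omega)
    have h2 : ((2 * (k + 1)).choose (k + 1) * (k + 1).factorial * ((2 * (k + 1)) - (k + 1)).factorial : ℕ)
        = (2 * (k + 1)).factorial := h
    rw [show 2 * (k + 1) - (k + 1) = k + 1 by omega] at h2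
    have h3 : (2 * (k + 1)).factorial = (2 * k + 2).factorial := by
      rw [show 2 * (k + 1) = 2 * k + 2 by ring]
    rw [h3] at h2
    exact_mod_cast congrArg (Nat.cast : ℕ → ℝ) h2
  have hfn1 : (((k + 1).factorial : ℝ)) ≠ 0 := Nat.cast_ne_zero.2 (k + 1).factorial_ne_zero
  have hcc : ((2 * (k + 1)).choose (k + 1) : ℝ)
      = ((2 * k + 2).factorial : ℝ) / (((k + 1).factorial : ℝ) * ((k + 1).factorial : ℝ)) := by
    rw [eq_div_iff (by positivity)]
    linear_combination hch
  have hfact : ((k + 1).factorial : ℝ) = ((k : ℝ) + 1) * k.factorial := by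
    rw [Nat.factorial_succ]; push_cast; ring
  have hfn : ((k.factorial : ℝ)) ≠ 0 := Nat.cast_ne_zero.2 k.factorial_ne_zero
  have hsπ : Real.sqrt Real.pi ≠ 0 := by
    have := Real.sqrt_pos.2 Real.pi_pos
    exact this.ne'
  have hπ : Real.sqrt Real.pi * Real.sqrt Real.pi = Real.pi :=
    Real.mul_self_sqrt Real.pi_pos.le
  have h4 : ((4 : ℝ)) ^ (k + 1) = 2 ^ (2 * k + 2) := by
    rw [show (4:ℝ) = 2 ^ 2 by norm_num, ← pow_mul]
    ring_nf
  have h3k : ((2 : ℝ)) ^ (3 * (k + 1)) = 2 ^ (2 * k + 2) * 2 ^ (k + 1) := by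
    rw [← pow_add]
    ring_nf
  have h2k2 : ((2 : ℝ)) ^ (2 * k + 2) = 2 ^ (2 * k + 1) * 2 := by
    rw [pow_succ]
  have h2k1 : ((2 : ℝ)) ^ (k + 1) = 2 ^ k * 2 := by rw [pow_succ]
  have h2n : ((2 : ℝ)) ^ (2 * k + 1) ≠ 0 := by positivity
  have h2kk : ((2 : ℝ)) ^ k ≠ 0 := by positivity
  rw [hcc, hfact, h3k, h4, h2k2, h2k1]
  set t : ℝ := Real.sqrt Real.pi with htdef
  have hπt : Real.pi = t * t := hπ.symm
  rw [hπt]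
  have ht : t ≠ 0 := hsπ
  field_simp
  ring
end Melon

open MeasureTheory

/-- odd-moment integrals of the two branches of the continuous
2-watermelon without wall condition. `C(2j,j)` is the central binomial coefficient. -/
theorem melonNW2_odd_moment_integrals (k : ℕ) :
    (1 / (2 * Real.pi) *
        (∫ q in {q : ℝ × ℝ | q.1 ≤ q.2},
          q.2 ^ (2 * k + 1) * (q.2 - q.1) ^ 2 * Real.exp (-(q.1 ^ 2 + q.2 ^ 2) / 2))
      = ((Nat.factorial (2 * k + 2) : ℝ) / (2 ^ (2 * k + 1) * (Nat.factorial (k + 1) : ℝ))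
            + (2 * (k : ℝ) + 3) * 2 ^ k * (Nat.factorial k : ℝ) *
              ∑ j ∈ Finset.range (k + 1), (Nat.choose (2 * j) j : ℝ) / 2 ^ (3 * j))
          / (2 * Real.sqrt Real.pi))
    ∧ (1 / (2 * Real.pi) *
        (∫ q in {q : ℝ × ℝ | q.1 ≤ q.2},
          q.1 ^ (2 * k + 1) * (q.2 - q.1) ^ 2 * Real.exp (-(q.1 ^ 2 + q.2 ^ 2) / 2))
      = -(((Nat.factorial (2 * k + 2) : ℝ) / (2 ^ (2 * k + 1) * (Nat.factorial (k + 1) : ℝ))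
            + (2 * (k : ℝ) + 3) * 2 ^ k * (Nat.factorial k : ℝ) *
              ∑ j ∈ Finset.range (k + 1), (Nat.choose (2 * j) j : ℝ) / 2 ^ (3 * j))
          / (2 * Real.sqrt Real.pi))) := by
  constructor
  · exact Melon.melonNW2_odd_moment_first k
  · rw [Melon.part2 (2 * k + 1) (odd_two_mul_add_one k), mul_neg,
      Melon.melonNW2_odd_moment_first k]
end
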